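/- arXiv:2203.04922 — 3 statements merged into one kernel-verified Lean document; each statement's English description precedes it below -/
import Mathlib

section
/- For every real r > 2 there exists a constant C_r > 0 such that for every τ ≥ 0 and all a, b, c : ℤ² → [0,∞]: ∑_{(j,k)∈ℤ²×ℤ²} a(j) · ‖k‖ · b(k) · ‖j+k‖^{r} e^{τ‖j+k‖} · c(j+k) · | ‖j+k‖^{r} e^{τ‖j+k‖} − ‖k‖^{r} e^{τ‖k‖} | ≤ C_r [ S_{r,0}(a) · S_{r,0}(b) · S_{r,0}(c) + τ · S_{r+1/2,τ}(a) · S_{r+1/2,τ}(b) · S_{r+1/2,τ}(c) ], where S_{ρ,0} denotes the weighted ℓ²-norm with τ = 0 (no exponential weight). (This is the Fourier-coefficient form of the commutator estimate |⟨A^r e^{τA}(f·∇g), A^r e^{τA}h⟩ − ⟨f·∇A^r e^{τA}g, A^r e^{τA}h⟩| of Lemma A.4.) -/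
open scoped ENNReal

noncomputable section

/-- Euclidean norm of a lattice point `k ∈ ℤ²` viewed as a vector in `ℝ²`. -/
def nz (k : ℤ × ℤ) : ℝ := Real.sqrt ((k.1 : ℝ) ^ 2 + (k.2 : ℝ) ^ 2)

/-- The weighted ℓ²-norm `S_{ρ,τ}(a) = (∑_k ‖k‖^{2ρ} e^{2τ‖k‖} a(k)²)^{1/2}`. -/
def S (ρ τ : ℝ) (a : ℤ × ℤ → ℝ≥0∞) : ℝ≥0∞ :=
  (∑' k : ℤ × ℤ, ENNReal.ofReal (nz k ^ (2 * ρ) * Real.exp (2 * τ * nz k)) * (a k) ^ 2)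
    ^ ((1 : ℝ) / 2)

namespace CommutatorAux

open MeasureTheory ENNReal Real

/-! ### Elementary facts about `nz` -/

lemma nz_nonneg (k : ℤ × ℤ) : 0 ≤ nz k := Real.sqrt_nonneg _

lemma nz_sq (k : ℤ × ℤ) : nz k ^ (2:ℕ) = (k.1:ℝ)^2 + (k.2:ℝ)^2 := by
  rw [nz, Real.sq_sqrt]; positivity

lemma int_abs_cases (k : ℤ × ℤ) (hk : k ≠ 0) : 1 ≤ |(k.1:ℝ)| ∨ 1 ≤ |(k.2:ℝ)| := by
  have h : k.1 ≠ 0 ∨ k.2 ≠ 0 := by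
    by_contra h; push_neg at h; exact hk (Prod.ext_iff.mpr ⟨h.1, h.2⟩)
  rcases h with h | h
  · left
    have := Int.one_le_abs h
    calc (1:ℝ) ≤ ((|k.1| : ℤ) : ℝ) := by exact_mod_cast this
      _ = |(k.1:ℝ)| := by push_cast; ring
  · right
    have := Int.one_le_abs h
    calc (1:ℝ) ≤ ((|k.2| : ℤ) : ℝ) := by exact_mod_cast this
      _ = |(k.2:ℝ)| := by push_cast; ring

lemma one_le_nz {k : ℤ × ℤ} (hk : k ≠ 0) : 1 ≤ nz k := by
  have h1 : (1:ℝ) ≤ (k.1:ℝ)^2 + (k.2:ℝ)^2 := by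
    rcases int_abs_cases k hk with h | h
    · nlinarith [sq_abs (k.1:ℝ), sq_nonneg (k.2:ℝ), abs_nonneg (k.1:ℝ)]
    · nlinarith [sq_abs (k.2:ℝ), sq_nonneg (k.1:ℝ), abs_nonneg (k.2:ℝ)]
  calc (1:ℝ) = Real.sqrt 1 := (Real.sqrt_one).symm
    _ ≤ nz k := Real.sqrt_le_sqrt h1

lemma nz_zero : nz 0 = 0 := by simp [nz]

lemma nz_eq_complex_abs (k : ℤ × ℤ) : nz k = ‖(⟨(k.1:ℝ), (k.2:ℝ)⟩ : ℂ)‖ := by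
  rw [Complex.norm_def, Complex.normSq_mk, nz]; congr 1; ring

lemma nz_triangle (j k : ℤ × ℤ) : nz (j + k) ≤ nz j + nz k := by
  rw [nz_eq_complex_abs, nz_eq_complex_abs, nz_eq_complex_abs]
  have e : (⟨((j+k).1:ℝ), ((j+k).2:ℝ)⟩ : ℂ)
      = (⟨(j.1:ℝ), (j.2:ℝ)⟩ : ℂ) + (⟨(k.1:ℝ), (k.2:ℝ)⟩ : ℂ) := by
    apply Complex.ext <;> simp [Prod.fst_add, Prod.snd_add] <;> push_cast <;> ring
  rw [e]
  exact norm_add_le _ _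

lemma nz_rev_triangle (j k : ℤ × ℤ) : |nz (j + k) - nz k| ≤ nz j := by
  rw [nz_eq_complex_abs, nz_eq_complex_abs, nz_eq_complex_abs]
  have e : (⟨((j+k).1:ℝ), ((j+k).2:ℝ)⟩ : ℂ) - (⟨(k.1:ℝ), (k.2:ℝ)⟩ : ℂ)
      = (⟨(j.1:ℝ), (j.2:ℝ)⟩ : ℂ) := by
    apply Complex.ext <;> simp [Prod.fst_add, Prod.snd_add] <;> push_cast <;> ring
  calc |‖(⟨((j+k).1:ℝ), ((j+k).2:ℝ)⟩ : ℂ)‖ - ‖(⟨(k.1:ℝ), (k.2:ℝ)⟩ : ℂ)‖|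
      ≤ ‖((⟨((j+k).1:ℝ), ((j+k).2:ℝ)⟩ : ℂ) - ⟨(k.1:ℝ), (k.2:ℝ)⟩)‖ :=
        abs_norm_sub_norm_le _ _
    _ = _ := by rw [e]

lemma nz_triangle' (j k : ℤ × ℤ) : nz k ≤ nz (j + k) + nz j := by
  have h := nz_rev_triangle j k
  have := neg_abs_le (nz (j+k) - nz k)
  linarith

/-! ### Cauchy–Schwarz and trilinear estimates -/

theorem cs_tsum {α : Type*} [Countable α] [MeasurableSpace α] [MeasurableSingletonClass α]
    (u v : α → ℝ≥0∞) :
    ∑' x, u x * v x ≤ (∑' x, u x ^ 2) ^ ((1:ℝ)/2) * (∑' x, v x ^ 2) ^ ((1:ℝ)/2) := by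
  have hpq : Real.HolderConjugate 2 2 := Real.HolderConjugate.two_two
  have h := ENNReal.lintegral_mul_le_Lp_mul_Lq (Measure.count (α := α)) hpq
    (measurable_of_countable u).aemeasurable (measurable_of_countable v).aemeasurable
  rw [lintegral_count, lintegral_count, lintegral_count] at h
  simp only [Pi.mul_apply] at h
  have e2 : ∀ w : ℝ≥0∞, w ^ (2:ℝ) = w ^ (2:ℕ) := fun w => by
    rw [← ENNReal.rpow_natCast w 2]; norm_num
  simp only [e2] at h
  exact h


theorem tri1 (F G H : ℤ × ℤ → ℝ≥0∞) :
    (∑' p : (ℤ × ℤ) × (ℤ × ℤ), F p.1 * G p.2 * H (p.1 + p.2))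
      ≤ (∑' j, F j) * ((∑' k, G k ^ 2) ^ ((1:ℝ)/2) * (∑' m, H m ^ 2) ^ ((1:ℝ)/2)) := by
  rw [ENNReal.tsum_prod (f := fun j k => F j * G k * H (j + k))]
  calc ∑' j, ∑' k, F j * G k * H (j + k)
      = ∑' j, F j * ∑' k, G k * H (j + k) := by
        refine tsum_congr fun j => ?_
        rw [← ENNReal.tsum_mul_left]
        exact tsum_congr fun k => (mul_assoc _ _ _)
    _ ≤ ∑' j, F j * ((∑' k, G k ^ 2) ^ ((1:ℝ)/2) * (∑' m, H m ^ 2) ^ ((1:ℝ)/2)) := by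
        refine ENNReal.tsum_le_tsum fun j => ?_
        refine mul_le_mul_right ?_ _
        refine le_trans (cs_tsum G (fun k => H (j + k))) ?_
        have : ∑' k, H (j + k) ^ 2 = ∑' m, H m ^ 2 := by
          exact Equiv.tsum_eq (Equiv.addLeft j) (fun m => H m ^ 2)
        rw [this]
    _ = _ := ENNReal.tsum_mul_right

theorem tri2 (F G H : ℤ × ℤ → ℝ≥0∞) :
    (∑' p : (ℤ × ℤ) × (ℤ × ℤ), F p.1 * G p.2 * H (p.1 + p.2))
      ≤ (∑' k, G k) * ((∑' j, F j ^ 2) ^ ((1:ℝ)/2) * (∑' m, H m ^ 2) ^ ((1:ℝ)/2)) := by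
  rw [ENNReal.tsum_prod' (f := fun p => F p.1 * G p.2 * H (p.1 + p.2)), ENNReal.tsum_comm]
  calc ∑' k, ∑' j, F j * G k * H (j + k)
      = ∑' k, G k * ∑' j, F j * H (j + k) := by
        refine tsum_congr fun k => ?_
        rw [← ENNReal.tsum_mul_left]
        exact tsum_congr fun j => by ring
    _ ≤ ∑' k, G k * ((∑' j, F j ^ 2) ^ ((1:ℝ)/2) * (∑' m, H m ^ 2) ^ ((1:ℝ)/2)) := by
        refine ENNReal.tsum_le_tsum fun k => ?_
        refine mul_le_mul_right ?_ _
        refine le_trans (cs_tsum F (fun j => H (j + k))) ?_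
        have : ∑' j, H (j + k) ^ 2 = ∑' m, H m ^ 2 := by
          exact Equiv.tsum_eq (Equiv.addRight k) (fun m => H m ^ 2)
        rw [this]
    _ = _ := ENNReal.tsum_mul_right


/-! ### Lattice sums -/

lemma lattice_sum_lt_top {q : ℝ} (hq : q < -2) :
    (∑' j : ℤ × ℤ, ENNReal.ofReal (nz j ^ q)) < ⊤ := by
  set b : ℝ := -q/2 with hb
  have hb1 : 1 < b := by rw [hb]; linarith
  have hqb : q/2 = -b := by rw [hb]; ring
  have key : ∀ j : ℤ × ℤ, ENNReal.ofReal (nz j ^ q) ≤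
      ENNReal.ofReal (4 ^ b) * (ENNReal.ofReal ((1 + |(j.1:ℝ)|) ^ (-b)) *
        ENNReal.ofReal ((1 + |(j.2:ℝ)|) ^ (-b))) := by
    intro j
    by_cases hj : j = 0
    · subst hj; rw [nz_zero, Real.zero_rpow (by linarith : q ≠ 0)]; simp
    · rw [← ENNReal.ofReal_mul (by positivity), ← ENNReal.ofReal_mul (by positivity)]
      apply ENNReal.ofReal_le_ofReal
      have hprod : (1 + |(j.1:ℝ)|) * (1 + |(j.2:ℝ)|) ≤ 4 * ((j.1:ℝ)^2 + (j.2:ℝ)^2) := by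
        have h1 : (0:ℝ) ≤ |(j.1:ℝ)| := abs_nonneg _
        have h2 : (0:ℝ) ≤ |(j.2:ℝ)| := abs_nonneg _
        have e1 : |(j.1:ℝ)|^2 = (j.1:ℝ)^2 := sq_abs _
        have e2 : |(j.2:ℝ)|^2 = (j.2:ℝ)^2 := sq_abs _
        rcases int_abs_cases j hj with h | h
        · nlinarith [sq_nonneg (|(j.1:ℝ)| - |(j.2:ℝ)|)]
        · nlinarith [sq_nonneg (|(j.1:ℝ)| - |(j.2:ℝ)|)]
      have e : nz j ^ q = ((j.1:ℝ)^2 + (j.2:ℝ)^2) ^ (q/2) := by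
        rw [← nz_sq j, ← Real.rpow_natCast (nz j) 2, ← Real.rpow_mul (nz_nonneg j)]
        congr 1; ring
      rw [e]
      have h4 : ((j.1:ℝ)^2 + (j.2:ℝ)^2) ^ (q/2) ≤
          (((1 + |(j.1:ℝ)|) * (1 + |(j.2:ℝ)|)) / 4) ^ (q/2) := by
        apply Real.rpow_le_rpow_of_nonpos (by positivity) (by linarith) (by linarith)
      refine h4.trans ?_
      rw [Real.div_rpow (by positivity) (by norm_num),
        Real.mul_rpow (by positivity) (by positivity), hqb,
        Real.rpow_neg (by norm_num : (0:ℝ) ≤ 4), div_eq_mul_inv, inv_inv, mul_comm]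
  refine lt_of_le_of_lt (ENNReal.tsum_le_tsum key) ?_
  rw [ENNReal.tsum_mul_left]
  have hT : (∑' n : ℤ, ENNReal.ofReal ((1 + |(n:ℝ)|) ^ (-b))) < ⊤ := by
    have hsum : (∑' n : ℤ, ENNReal.ofReal (|(n:ℝ)| ^ (-b))) < ⊤ := by
      rw [← ENNReal.ofReal_tsum_of_nonneg (fun n => by positivity)
        (Real.summable_abs_int_rpow hb1)]
      exact ENNReal.ofReal_lt_top
    rw [ENNReal.tsum_eq_add_tsum_ite (0:ℤ)]
    refine ENNReal.add_lt_top.mpr ⟨ENNReal.ofReal_lt_top,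
      lt_of_le_of_lt (ENNReal.tsum_le_tsum fun n => ?_) hsum⟩
    by_cases hn : n = 0
    · simp [hn]
    · simp only [hn, if_false]
      apply ENNReal.ofReal_le_ofReal
      apply Real.rpow_le_rpow_of_nonpos
      · have h1 := Int.one_le_abs hn
        have : (1:ℝ) ≤ |(n:ℝ)| := by
          calc (1:ℝ) ≤ ((|n| : ℤ) : ℝ) := by exact_mod_cast h1
            _ = |(n:ℝ)| := by push_cast; ring
        linarith
      · linarith [abs_nonneg (n:ℝ)]
      · linarith
  have hfact : (∑' j : ℤ × ℤ, ENNReal.ofReal ((1 + |(j.1:ℝ)|) ^ (-b)) *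
      ENNReal.ofReal ((1 + |(j.2:ℝ)|) ^ (-b)))
      = (∑' n : ℤ, ENNReal.ofReal ((1 + |(n:ℝ)|) ^ (-b)))
        * (∑' n : ℤ, ENNReal.ofReal ((1 + |(n:ℝ)|) ^ (-b))) := by
    rw [ENNReal.tsum_prod' (f := fun j : ℤ × ℤ => ENNReal.ofReal ((1 + |(j.1:ℝ)|) ^ (-b)) *
      ENNReal.ofReal ((1 + |(j.2:ℝ)|) ^ (-b)))]
    simp only
    rw [← ENNReal.tsum_mul_right]
    exact tsum_congr fun a => by rw [ENNReal.tsum_mul_left]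
  rw [hfact]
  exact ENNReal.mul_lt_top ENNReal.ofReal_lt_top
    (ENNReal.mul_lt_top hT hT)

/-! ### Real inequalities -/

lemma exp_sub_one_le' {s : ℝ} (hs : 0 ≤ s) : Real.exp s - 1 ≤ s * Real.exp s := by
  have h1 := Real.add_one_le_exp (-s)
  have h2 : Real.exp (-s) * Real.exp s = 1 := by rw [← Real.exp_add]; simp
  nlinarith [Real.exp_pos s, Real.exp_pos (-s)]

lemma rpow_diff_le {p : ℝ} (hp : 1 ≤ p) {x y z : ℝ} (h0 : 0 ≤ y) (hxy : y ≤ x)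
    (hz : x - y ≤ z) : x ^ p - y ^ p ≤ p * z * x ^ (p - 1) := by
  have hx0 : 0 ≤ x := le_trans h0 hxy
  have hf : ∀ t ∈ Set.Icc y x, HasDerivWithinAt (fun u : ℝ => u ^ p)
      (p * t ^ (p - 1)) (Set.Icc y x) t :=
    fun t _ => (Real.hasDerivAt_rpow_const (Or.inr hp)).hasDerivWithinAt
  have bound : ∀ t ∈ Set.Ico y x, ‖p * t ^ (p - 1)‖ ≤ p * x ^ (p - 1) := by
    intro t ht
    have ht0 : 0 ≤ t := le_trans h0 ht.1
    rw [Real.norm_eq_abs, abs_of_nonneg (by positivity)]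
    exact mul_le_mul_of_nonneg_left
      (Real.rpow_le_rpow ht0 (le_of_lt ht.2) (by linarith)) (by linarith)
  have := norm_image_sub_le_of_norm_deriv_le_segment' hf bound x
    (Set.right_mem_Icc.mpr hxy)
  rw [Real.norm_eq_abs] at this
  have h3 : x ^ p - y ^ p ≤ p * x ^ (p - 1) * (x - y) := le_trans (le_abs_self _) this
  calc x ^ p - y ^ p ≤ p * x ^ (p - 1) * (x - y) := h3
    _ ≤ p * x ^ (p - 1) * z := by
        apply mul_le_mul_of_nonneg_left hz (by positivity)
    _ = p * z * x ^ (p - 1) := by ring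

lemma abs_rpow_diff_le {p : ℝ} (hp : 1 ≤ p) {x y z : ℝ} (hx : 0 ≤ x) (hy : 0 ≤ y)
    (hz : |x - y| ≤ z) : |x ^ p - y ^ p| ≤ p * z * (x ^ (p - 1) + y ^ (p - 1)) := by
  have hz0 : 0 ≤ z := le_trans (abs_nonneg _) hz
  rcases le_total y x with h | h
  · have h1 : y ^ p ≤ x ^ p := Real.rpow_le_rpow hy h (by linarith)
    rw [abs_of_nonneg (by linarith)]
    have := rpow_diff_le hp hy h (le_trans (le_abs_self _) hz)
    have h2 : (0:ℝ) ≤ y ^ (p-1) := Real.rpow_nonneg hy _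
    nlinarith [mul_nonneg (mul_nonneg (by linarith : (0:ℝ) ≤ p) hz0) h2]
  · have h1 : x ^ p ≤ y ^ p := Real.rpow_le_rpow hx h (by linarith)
    rw [abs_of_nonpos (by linarith), neg_sub]
    have hz' : y - x ≤ z := by
      have := neg_abs_le (x - y); linarith [hz]
    have := rpow_diff_le hp hx h hz'
    have h2 : (0:ℝ) ≤ x ^ (p-1) := Real.rpow_nonneg hx _
    nlinarith [mul_nonneg (mul_nonneg (by linarith : (0:ℝ) ≤ p) hz0) h2]

lemma abs_exp_diff_le {τ x y z : ℝ} (hτ : 0 ≤ τ) (hz : |x - y| ≤ z) :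
    |Real.exp (τ * x) - Real.exp (τ * y)| ≤ τ * z * Real.exp (τ * z) * Real.exp (τ * y) := by
  have hz0 : 0 ≤ z := le_trans (abs_nonneg _) hz
  rcases le_total y x with h | h
  · have hxy : x - y ≤ z := le_trans (le_abs_self _) hz
    have hs : (0:ℝ) ≤ τ * (x - y) := mul_nonneg hτ (by linarith)
    have h1 : Real.exp (τ * x) - Real.exp (τ * y)
        = Real.exp (τ * y) * (Real.exp (τ * (x - y)) - 1) := by
      rw [mul_sub, ← Real.exp_add]; ring_nf
    have h2 := exp_sub_one_le' hs
    have h3 : τ * (x - y) * Real.exp (τ * (x - y)) ≤ τ * z * Real.exp (τ * z) := by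
      apply mul_le_mul (by nlinarith) (Real.exp_le_exp.mpr (by nlinarith))
        (Real.exp_pos _).le (by positivity)
    rw [abs_of_nonneg (by nlinarith [Real.exp_le_exp.mpr (mul_le_mul_of_nonneg_left h hτ)])]
    rw [h1]
    calc Real.exp (τ * y) * (Real.exp (τ * (x - y)) - 1)
        ≤ Real.exp (τ * y) * (τ * z * Real.exp (τ * z)) := by
          apply mul_le_mul_of_nonneg_left (le_trans h2 h3) (Real.exp_pos _).le
      _ = τ * z * Real.exp (τ * z) * Real.exp (τ * y) := by ring
  · have hxy : y - x ≤ z := by have := neg_abs_le (x - y); linarith [hz]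
    have hs : (0:ℝ) ≤ τ * (y - x) := mul_nonneg hτ (by linarith)
    have h1 : Real.exp (τ * y) - Real.exp (τ * x)
        = Real.exp (τ * x) * (Real.exp (τ * (y - x)) - 1) := by
      rw [mul_sub, ← Real.exp_add]; ring_nf
    have h2 := exp_sub_one_le' hs
    have h3 : τ * (y - x) * Real.exp (τ * (y - x)) ≤ τ * z * Real.exp (τ * z) := by
      apply mul_le_mul (by nlinarith) (Real.exp_le_exp.mpr (by nlinarith))
        (Real.exp_pos _).le (by positivity)
    have hex : Real.exp (τ * x) ≤ Real.exp (τ * y) :=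
      Real.exp_le_exp.mpr (mul_le_mul_of_nonneg_left h hτ)
    rw [abs_of_nonpos (by nlinarith), neg_sub, h1]
    calc Real.exp (τ * x) * (Real.exp (τ * (y - x)) - 1)
        ≤ Real.exp (τ * x) * (τ * z * Real.exp (τ * z)) := by
          apply mul_le_mul_of_nonneg_left (le_trans h2 h3) (Real.exp_pos _).le
      _ ≤ Real.exp (τ * y) * (τ * z * Real.exp (τ * z)) := by
          apply mul_le_mul_of_nonneg_right hex (by positivity)
      _ = τ * z * Real.exp (τ * z) * Real.exp (τ * y) := by ring

lemma two_rpow_split {v w p : ℝ} (hv : 0 ≤ v) (hw : 0 ≤ w) (hp : 0 ≤ p) :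
    (v + w) ^ p ≤ 2 ^ p * (v ^ p + w ^ p) := by
  have h1 : v + w ≤ 2 * max v w := by
    rcases le_total v w with h | h
    · rw [max_eq_right h]; linarith
    · rw [max_eq_left h]; linarith
  calc (v + w) ^ p ≤ (2 * max v w) ^ p :=
        Real.rpow_le_rpow (by positivity) h1 hp
    _ = 2 ^ p * (max v w) ^ p := Real.mul_rpow (by norm_num) (le_max_iff.mpr (Or.inl hv))
    _ ≤ 2 ^ p * (v ^ p + w ^ p) := by
        apply mul_le_mul_of_nonneg_left _ (by positivity)
        rcases le_total v w with h | h
        · rw [max_eq_right h]; nlinarith [Real.rpow_nonneg hv p]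
        · rw [max_eq_left h]; nlinarith [Real.rpow_nonneg hw p]


lemma rpow_combine {u : ℝ} (hu : 0 < u) {a b c : ℝ} (h : a + b = c) :
    u ^ a * u ^ b = u ^ c := by rw [← Real.rpow_add hu, h]


lemma two_rpow_split' {v w p : ℝ} (hv : 0 ≤ v) (hw : 0 ≤ w) (hp : 0 ≤ p) :
    (v + w) ^ p ≤ 2 ^ p * (v ^ p + w ^ p) := by
  have h1 : v + w ≤ 2 * max v w := by
    rcases le_total v w with h | h
    · rw [max_eq_right h]; linarith
    · rw [max_eq_left h]; linarith
  calc (v + w) ^ p ≤ (2 * max v w) ^ p :=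
        Real.rpow_le_rpow (by positivity) h1 hp
    _ = 2 ^ p * (max v w) ^ p := Real.mul_rpow (by norm_num) (le_max_iff.mpr (Or.inl hv))
    _ ≤ 2 ^ p * (v ^ p + w ^ p) := by
        apply mul_le_mul_of_nonneg_left _ (by positivity)
        rcases le_total v w with h | h
        · rw [max_eq_right h]; nlinarith [Real.rpow_nonneg hv p]
        · rw [max_eq_left h]; nlinarith [Real.rpow_nonneg hw p]

lemma split_bound {x y z r p : ℝ} (hx : 1 ≤ x) (hy : 1 ≤ y) (hz : 1 ≤ z) (hr : 2 < r)
    (hxyz : x ≤ y + z) (hp : 0 ≤ p) (hpr : p ≤ r + 2) :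
    x ^ p ≤ 2 ^ (r + 2) * (y ^ p + z ^ p) := by
  have h1 : x ^ p ≤ (y + z) ^ p := Real.rpow_le_rpow (by linarith) hxyz hp
  refine h1.trans ((two_rpow_split' (by linarith) (by linarith) hp).trans ?_)
  apply mul_le_mul_of_nonneg_right
    (Real.rpow_le_rpow_of_exponent_le one_le_two hpr)
    (by positivity)

lemma self_le_rpow {u p : ℝ} (hu : 1 ≤ u) (hp : 1 ≤ p) : u ≤ u ^ p := by
  calc u = u ^ (1:ℝ) := (Real.rpow_one u).symm
    _ ≤ u ^ p := Real.rpow_le_rpow_of_exponent_le hu hp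


/-! ### The key pointwise estimate -/

set_option maxHeartbeats 1000000 in
lemma key_pointwise {r : ℝ} (hr : 2 < r) {τ x y z : ℝ} (hτ : 0 ≤ τ)
    (hx : 1 ≤ x) (hy : 1 ≤ y) (hz : 1 ≤ z)
    (hxyz : x ≤ y + z) (hyxz : y ≤ x + z) (habs : |x - y| ≤ z) :
    y * (x ^ r * Real.exp (τ * x)) * |x ^ r * Real.exp (τ * x) - y ^ r * Real.exp (τ * y)|
      ≤ (10 * r * 2 ^ (r + 2)) *
        ((z * y ^ r * x ^ r + z ^ r * y * x ^ r)
          + τ * ((z ^ (3/2 : ℝ) * Real.exp (τ * z)) * (y ^ (r + 1/2) * Real.exp (τ * y))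
              * (x ^ (r + 1/2) * Real.exp (τ * x))
            + (z ^ (r + 1/2) * Real.exp (τ * z)) * (y ^ (3/2 : ℝ) * Real.exp (τ * y))
              * (x ^ (r + 1/2) * Real.exp (τ * x)))) := by
  have hx0 : (0:ℝ) < x := by linarith
  have hy0 : (0:ℝ) < y := by linarith
  have hz0 : (0:ℝ) < z := by linarith
  set ex := Real.exp (τ * x) with hex
  set ey := Real.exp (τ * y) with hey
  set ez := Real.exp (τ * z) with hez
  have hexpos : 0 < ex := Real.exp_pos _
  have heypos : 0 < ey := Real.exp_pos _
  have hezpos : 0 < ez := Real.exp_pos _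
  set c : ℝ := 2 ^ (r + 2) with hc
  have hc1 : (1:ℝ) ≤ c := by
    rw [hc]; calc (1:ℝ) = 2 ^ (0:ℝ) := (Real.rpow_zero 2).symm
      _ ≤ 2 ^ (r+2) := Real.rpow_le_rpow_of_exponent_le one_le_two (by linarith)
  set P1p : ℝ := z ^ (3/2:ℝ) * y ^ (r + 1/2) * x ^ (r + 1/2) with hP1p
  set P2p : ℝ := z ^ (r + 1/2) * y ^ (3/2:ℝ) * x ^ (r + 1/2) with hP2p
  set Q1 : ℝ := z * y ^ r * x ^ r with hQ1
  set Q2 : ℝ := z ^ r * y * x ^ r with hQ2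
  set E : ℝ := ex * ey * ez with hE
  have hEpos : 0 < E := by positivity
  have hQ1nn : 0 ≤ Q1 := by rw [hQ1]; positivity
  have hQ2nn : 0 ≤ Q2 := by rw [hQ2]; positivity
  have hP1nn : 0 ≤ P1p := by rw [hP1p]; positivity
  have hP2nn : 0 ≤ P2p := by rw [hP2p]; positivity
  -- step 1 : bound on |D|
  have hstep1 : |x ^ r - y ^ r| ≤ r * z * (x ^ (r-1) + y ^ (r-1)) :=
    abs_rpow_diff_le (by linarith) hx0.le hy0.le habs
  have hstep2 : |ex - ey| ≤ τ * z * ez * ey := abs_exp_diff_le hτ habs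
  have hD : |x ^ r * ex - y ^ r * ey| ≤
      |x ^ r - y ^ r| * ex + y ^ r * |ex - ey| := by
    have e : x ^ r * ex - y ^ r * ey = (x ^ r - y ^ r) * ex + y ^ r * (ex - ey) := by ring
    rw [e]
    refine (abs_add_le _ _).trans ?_
    rw [abs_mul, abs_mul, abs_of_nonneg hexpos.le,
      abs_of_nonneg (Real.rpow_nonneg hy0.le r)]
  have hDbound : |x ^ r * ex - y ^ r * ey| ≤
      r * z * (x ^ (r-1) + y ^ (r-1)) * ex + y ^ r * (τ * z * ez * ey) := by
    refine hD.trans (add_le_add ?_ ?_)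
    · exact mul_le_mul_of_nonneg_right hstep1 hexpos.le
    · exact mul_le_mul_of_nonneg_left hstep2 (Real.rpow_nonneg hy0.le r)
  -- multiply by the prefactor
  have hpre : 0 ≤ y * (x ^ r * ex) := by positivity
  have hmain : y * (x ^ r * ex) * |x ^ r * ex - y ^ r * ey| ≤
      r * (z * y * x ^ (r-1) * x ^ r) * (ex * ex)
      + r * (z * y * y ^ (r-1) * x ^ r) * (ex * ex)
      + τ * (z * (y * y ^ r) * x ^ r) * E := by
    refine (mul_le_mul_of_nonneg_left hDbound hpre).trans (le_of_eq ?_)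
    rw [hE]; ring
  -- exponential bound : ex * ex ≤ 1 + 2 τ x E
  have hw : ex * ex ≤ 1 + 2 * (τ * x) * E := by
    have h2 := exp_sub_one_le' (s := τ * x + τ * x) (by positivity)
    have h3 : Real.exp (τ * x + τ * x) ≤ E := by
      rw [hE, hex, hey, hez, ← Real.exp_add, ← Real.exp_add]
      apply Real.exp_le_exp.mpr
      have h4 : τ * x ≤ τ * (y + z) := mul_le_mul_of_nonneg_left hxyz hτ
      nlinarith
    have hs0 : (0:ℝ) ≤ τ * x + τ * x := by positivity
    calc ex * ex = Real.exp (τ * x + τ * x) := by rw [hex, Real.exp_add]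
      _ ≤ 1 + (τ * x + τ * x) * Real.exp (τ * x + τ * x) := by linarith
      _ ≤ 1 + (τ * x + τ * x) * E := by
          exact add_le_add_right (mul_le_mul_of_nonneg_left h3 hs0) 1
      _ = 1 + 2 * (τ * x) * E := by ring
  -- monomial bounds
  have hyr : y * y ^ (r-1) = y ^ r := by
    rw [mul_comm y (y ^ (r-1)), ← Real.rpow_add_one hy0.ne']; congr 1; ring
  have hzr : z * z ^ (r-1) = z ^ r := by
    rw [mul_comm z (z ^ (r-1)), ← Real.rpow_add_one hz0.ne']; congr 1; ring
  have hz32 : z * z ^ (1/2:ℝ) = z ^ (3/2:ℝ) := by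
    rw [mul_comm z (z ^ (1/2:ℝ)), ← Real.rpow_add_one hz0.ne']; congr 1; norm_num
  have hrhalf : (0:ℝ) ≤ r - 1/2 := by linarith
  have hM0a : z * y * x ^ (r-1) * x ^ r ≤ c * (Q1 + Q2) := by
    have h1 : x ^ (r-1) ≤ c * (y ^ (r-1) + z ^ (r-1)) :=
      split_bound hx hy hz hr hxyz (by linarith) (by linarith)
    calc z * y * x ^ (r-1) * x ^ r ≤ z * y * (c * (y ^ (r-1) + z ^ (r-1))) * x ^ r := by
          apply mul_le_mul_of_nonneg_right _ (Real.rpow_nonneg hx0.le r)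
          apply mul_le_mul_of_nonneg_left h1 (by positivity)
      _ = c * ((z * (y * y ^ (r-1)) * x ^ r) + ((z * z ^ (r-1)) * y * x ^ r)) := by ring
      _ = c * (Q1 + Q2) := by rw [hyr, hzr, hQ1, hQ2]
  have hM1 : z * y * x ^ (r-1) * (x ^ r * x) ≤ c * (P1p + P2p) := by
    have e1 : x ^ (r-1) * (x ^ r * x) = x ^ (r - 1/2) * x ^ (r + 1/2) := by
      rw [← Real.rpow_add_one hx0.ne' r,
        rpow_combine hx0 (show (r-1) + (r+1) = (r - 1/2) + (r + 1/2) by ring),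
        rpow_combine hx0 rfl]
    have h1 : x ^ (r - 1/2) ≤ c * (y ^ (r - 1/2) + z ^ (r - 1/2)) :=
      split_bound hx hy hz hr hxyz hrhalf (by linarith)
    calc z * y * x ^ (r-1) * (x ^ r * x) = z * y * (x ^ (r - 1/2) * x ^ (r + 1/2)) := by
          rw [mul_assoc, e1]
      _ ≤ z * y * ((c * (y ^ (r - 1/2) + z ^ (r - 1/2))) * x ^ (r + 1/2)) := by
          apply mul_le_mul_of_nonneg_left _ (by positivity)
          exact mul_le_mul_of_nonneg_right h1 (Real.rpow_nonneg hx0.le _)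
      _ = c * ((z * (y * y ^ (r - 1/2)) * x ^ (r + 1/2))
            + ((z * z ^ (r - 1/2)) * y * x ^ (r + 1/2))) := by ring
      _ = c * ((z * y ^ (r + 1/2) * x ^ (r + 1/2))
            + (z ^ (r + 1/2) * y * x ^ (r + 1/2))) := by
          rw [show y * y ^ (r - 1/2) = y ^ (r + 1/2) by
              rw [mul_comm y (y ^ (r - 1/2)), ← Real.rpow_add_one hy0.ne']; congr 1; ring,
            show z * z ^ (r - 1/2) = z ^ (r + 1/2) by
              rw [mul_comm z (z ^ (r - 1/2)), ← Real.rpow_add_one hz0.ne']; congr 1; ring]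
      _ ≤ c * (P1p + P2p) := by
          apply mul_le_mul_of_nonneg_left _ (by linarith)
          rw [hP1p, hP2p]
          apply add_le_add
          · apply mul_le_mul_of_nonneg_right _ (Real.rpow_nonneg hx0.le _)
            exact mul_le_mul_of_nonneg_right
              (self_le_rpow hz (by norm_num)) (Real.rpow_nonneg hy0.le _)
          · apply mul_le_mul_of_nonneg_right _ (Real.rpow_nonneg hx0.le _)
            exact mul_le_mul_of_nonneg_left
              (self_le_rpow hy (by norm_num)) (Real.rpow_nonneg hz0.le _)
  have hM2 : z * y * y ^ (r-1) * (x ^ r * x) ≤ 2 * c * P1p := by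
    have e1 : x ^ r * x = x ^ (1/2:ℝ) * x ^ (r + 1/2) := by
      rw [← Real.rpow_add_one hx0.ne' r,
        rpow_combine hx0 (show (1:ℝ)/2 + (r + 1/2) = r + 1 by ring)]
    have h1 : x ^ (1/2 : ℝ) ≤ c * (y ^ (1/2 : ℝ) + z ^ (1/2 : ℝ)) :=
      split_bound hx hy hz hr hxyz (by norm_num) (by linarith)
    calc z * y * y ^ (r-1) * (x ^ r * x)
        = z * y ^ r * (x ^ (1/2:ℝ) * x ^ (r + 1/2)) := by
          rw [e1, ← hyr]; ring
      _ ≤ z * y ^ r * ((c * (y ^ (1/2:ℝ) + z ^ (1/2:ℝ))) * x ^ (r + 1/2)) := by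
          apply mul_le_mul_of_nonneg_left _ (by positivity)
          exact mul_le_mul_of_nonneg_right h1 (Real.rpow_nonneg hx0.le _)
      _ = c * ((z * (y ^ r * y ^ (1/2:ℝ)) * x ^ (r + 1/2))
            + ((z * z ^ (1/2:ℝ)) * y ^ r * x ^ (r + 1/2))) := by ring
      _ = c * ((z * y ^ (r + 1/2) * x ^ (r + 1/2))
            + (z ^ (3/2:ℝ) * y ^ r * x ^ (r + 1/2))) := by
          rw [rpow_combine hy0 rfl, hz32]
      _ ≤ c * (P1p + P1p) := by
          apply mul_le_mul_of_nonneg_left _ (by linarith)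
          rw [hP1p]
          apply add_le_add
          · apply mul_le_mul_of_nonneg_right _ (Real.rpow_nonneg hx0.le _)
            exact mul_le_mul_of_nonneg_right
              (self_le_rpow hz (by norm_num)) (Real.rpow_nonneg hy0.le _)
          · apply mul_le_mul_of_nonneg_right _ (Real.rpow_nonneg hx0.le _)
            exact mul_le_mul_of_nonneg_left
              (Real.rpow_le_rpow_of_exponent_le hy (by linarith))
              (Real.rpow_nonneg hz0.le _)
      _ = 2 * c * P1p := by ring
  have hM3 : z * (y * y ^ r) * x ^ r ≤ 2 * c * P1p := by
    have e1 : y * y ^ r = y ^ (1/2:ℝ) * y ^ (r + 1/2) := by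
      rw [mul_comm y (y ^ r), ← Real.rpow_add_one hy0.ne',
        rpow_combine hy0 (show (1:ℝ)/2 + (r + 1/2) = r + 1 by ring)]
    have h1 : y ^ (1/2 : ℝ) ≤ c * (x ^ (1/2 : ℝ) + z ^ (1/2 : ℝ)) :=
      split_bound hy hx hz hr hyxz (by norm_num) (by linarith)
    calc z * (y * y ^ r) * x ^ r
        = z * y ^ (r + 1/2) * y ^ (1/2:ℝ) * x ^ r := by rw [e1]; ring
      _ ≤ z * y ^ (r + 1/2) * (c * (x ^ (1/2:ℝ) + z ^ (1/2:ℝ))) * x ^ r := by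
          apply mul_le_mul_of_nonneg_right _ (Real.rpow_nonneg hx0.le _)
          exact mul_le_mul_of_nonneg_left h1 (by positivity)
      _ = c * ((z * y ^ (r + 1/2) * (x ^ r * x ^ (1/2:ℝ)))
            + ((z * z ^ (1/2:ℝ)) * y ^ (r + 1/2) * x ^ r)) := by ring
      _ = c * ((z * y ^ (r + 1/2) * x ^ (r + 1/2))
            + (z ^ (3/2:ℝ) * y ^ (r + 1/2) * x ^ r)) := by
          rw [rpow_combine hx0 rfl, hz32]
      _ ≤ c * (P1p + P1p) := by
          apply mul_le_mul_of_nonneg_left _ (by linarith)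
          rw [hP1p]
          apply add_le_add
          · apply mul_le_mul_of_nonneg_right _ (Real.rpow_nonneg hx0.le _)
            exact mul_le_mul_of_nonneg_right
              (self_le_rpow hz (by norm_num)) (Real.rpow_nonneg hy0.le _)
          · apply mul_le_mul_of_nonneg_left _ (by positivity)
            exact Real.rpow_le_rpow_of_exponent_le hx (by linarith)
      _ = 2 * c * P1p := by ring
  -- assembly
  have hr0 : (0:ℝ) < r := by linarith
  have hc0 : (0:ℝ) < c := by linarith
  have hA1nn : (0:ℝ) ≤ r * (z * y * x ^ (r-1) * x ^ r) := by
    apply mul_nonneg hr0.le; positivity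
  have hA2nn : (0:ℝ) ≤ r * (z * y * y ^ (r-1) * x ^ r) := by
    apply mul_nonneg hr0.le; positivity
  have hT1a : r * (z * y * x ^ (r-1) * x ^ r) * (ex * ex)
      ≤ r * c * (Q1 + Q2) + τ * (2 * r * c * (P1p + P2p)) * E := by
    calc r * (z * y * x ^ (r-1) * x ^ r) * (ex * ex)
        ≤ r * (z * y * x ^ (r-1) * x ^ r) * (1 + 2 * (τ * x) * E) :=
          mul_le_mul_of_nonneg_left hw hA1nn
      _ = r * (z * y * x ^ (r-1) * x ^ r)
          + (2 * r * τ) * ((z * y * x ^ (r-1) * (x ^ r * x)) * E) := by ring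
      _ ≤ r * (c * (Q1 + Q2)) + (2 * r * τ) * ((c * (P1p + P2p)) * E) := by
          apply add_le_add (mul_le_mul_of_nonneg_left hM0a hr0.le)
          apply mul_le_mul_of_nonneg_left
            (mul_le_mul_of_nonneg_right hM1 hEpos.le)
          exact mul_nonneg (by linarith) hτ
      _ = r * c * (Q1 + Q2) + τ * (2 * r * c * (P1p + P2p)) * E := by ring
  have hA2eq : z * y * y ^ (r-1) * x ^ r = Q1 := by rw [hQ1, ← hyr]; ring
  have hT1b : r * (z * y * y ^ (r-1) * x ^ r) * (ex * ex)
      ≤ r * Q1 + τ * (4 * r * c * P1p) * E := by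
    calc r * (z * y * y ^ (r-1) * x ^ r) * (ex * ex)
        ≤ r * (z * y * y ^ (r-1) * x ^ r) * (1 + 2 * (τ * x) * E) :=
          mul_le_mul_of_nonneg_left hw hA2nn
      _ = r * (z * y * y ^ (r-1) * x ^ r)
          + (2 * r * τ) * ((z * y * y ^ (r-1) * (x ^ r * x)) * E) := by ring
      _ ≤ r * Q1 + (2 * r * τ) * ((2 * c * P1p) * E) := by
          apply add_le_add (le_of_eq (by rw [hA2eq]))
          apply mul_le_mul_of_nonneg_left
            (mul_le_mul_of_nonneg_right hM2 hEpos.le)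
          exact mul_nonneg (by linarith) hτ
      _ = r * Q1 + τ * (4 * r * c * P1p) * E := by ring
  have hT2 : τ * (z * (y * y ^ r) * x ^ r) * E ≤ τ * (2 * c * P1p) * E :=
    mul_le_mul_of_nonneg_right (mul_le_mul_of_nonneg_left hM3 hτ) hEpos.le
  have hUnn : (0:ℝ) ≤ τ * (P1p * E) := mul_nonneg hτ (mul_nonneg hP1nn hEpos.le)
  have hVnn : (0:ℝ) ≤ τ * (P2p * E) := mul_nonneg hτ (mul_nonneg hP2nn hEpos.le)
  have final : r * (z * y * x ^ (r-1) * x ^ r) * (ex * ex)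
      + r * (z * y * y ^ (r-1) * x ^ r) * (ex * ex)
      + τ * (z * (y * y ^ r) * x ^ r) * E
      ≤ 10 * r * c * ((Q1 + Q2) + τ * (P1p * E + P2p * E)) := by
    have h := add_le_add (add_le_add hT1a hT1b) hT2
    refine h.trans ?_
    have k1 : r * Q1 ≤ r * c * Q1 := by
      calc r * Q1 = 1 * (r * Q1) := by ring
        _ ≤ c * (r * Q1) := mul_le_mul_of_nonneg_right hc1 (mul_nonneg hr0.le hQ1nn)
        _ = r * c * Q1 := by ring
    have k2 : 2 * c * (τ * (P1p * E)) ≤ r * c * (τ * (P1p * E)) :=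
      mul_le_mul_of_nonneg_right
        (mul_le_mul_of_nonneg_right hr.le hc0.le) hUnn
    have n1 : 0 ≤ r * c * Q1 := mul_nonneg (mul_nonneg hr0.le hc0.le) hQ1nn
    have n2 : 0 ≤ r * c * Q2 := mul_nonneg (mul_nonneg hr0.le hc0.le) hQ2nn
    have n3 : 0 ≤ r * c * (τ * (P1p * E)) := mul_nonneg (mul_nonneg hr0.le hc0.le) hUnn
    have n4 : 0 ≤ r * c * (τ * (P2p * E)) := mul_nonneg (mul_nonneg hr0.le hc0.le) hVnn
    linarith
  refine hmain.trans (final.trans (le_of_eq ?_))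
  rw [hP1p, hP2p, hE]
  ring


/-! ### Weighted coefficients -/

/-- weight `‖m‖^s e^{t‖m‖}` as an extended nonnegative real -/
def W (s t : ℝ) (m : ℤ × ℤ) : ℝ≥0∞ :=
  ENNReal.ofReal (nz m ^ s * Real.exp (t * nz m))

lemma W_sq {s : ℝ} (hs : 0 < s) (t : ℝ) (m : ℤ × ℤ) :
    (W s t m) ^ 2 = ENNReal.ofReal (nz m ^ (2 * s) * Real.exp (2 * t * nz m)) := by
  by_cases hm : m = 0
  · subst hm
    rw [W, nz_zero, Real.zero_rpow hs.ne', Real.zero_rpow (by positivity : (2*s) ≠ 0)]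
    simp
  · have h0 : 0 < nz m := lt_of_lt_of_le one_pos (one_le_nz hm)
    rw [W, ← ENNReal.ofReal_pow (by positivity)]
    congr 1
    rw [pow_two, mul_mul_mul_comm, rpow_combine h0 (show s + s = 2*s by ring),
      ← Real.exp_add]
    congr 2
    ring

lemma sum_W_sq {s : ℝ} (hs : 0 < s) (t : ℝ) (a : ℤ × ℤ → ℝ≥0∞) :
    (∑' m, (W s t m * a m) ^ 2) ^ ((1:ℝ)/2) = S s t a := by
  rw [S]
  congr 1
  refine tsum_congr fun m => ?_
  rw [mul_pow, W_sq hs t m]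

lemma l1_gen {r : ℝ} (hr : 2 < r) {t γ s : ℝ} (hγ : 0 < γ) (hs : γ + (r - 1) = s)
    (a : ℤ × ℤ → ℝ≥0∞) :
    ∑' j, W γ t j * a j
      ≤ (∑' j : ℤ × ℤ, ENNReal.ofReal (nz j ^ (2 - 2*r))) ^ ((1:ℝ)/2) * S s t a := by
  have hs0 : 0 < s := by linarith
  have hpt : ∀ j, W γ t j * a j
      = ENNReal.ofReal (nz j ^ (1 - r)) * (W s t j * a j) := by
    intro j
    by_cases hj : j = 0
    · subst hj
      rw [W, W, nz_zero, Real.zero_rpow hγ.ne', Real.zero_rpow hs0.ne',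
        Real.zero_rpow (show (1:ℝ) - r ≠ 0 by intro h; rw [sub_eq_zero] at h; linarith)]
      simp
    · have h0 : 0 < nz j := lt_of_lt_of_le one_pos (one_le_nz hj)
      rw [W, W, show nz j ^ γ = nz j ^ (1 - r) * nz j ^ s by
          rw [rpow_combine h0 (show (1:ℝ) - r + s = γ by linarith)],
        mul_assoc (nz j ^ (1-r)), ENNReal.ofReal_mul (by positivity), mul_assoc]
  calc ∑' j, W γ t j * a j
      = ∑' j, ENNReal.ofReal (nz j ^ (1 - r)) * (W s t j * a j) := tsum_congr hpt
    _ ≤ (∑' j, (ENNReal.ofReal (nz j ^ (1 - r))) ^ 2) ^ ((1:ℝ)/2)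
        * (∑' j, (W s t j * a j) ^ 2) ^ ((1:ℝ)/2) := cs_tsum _ _
    _ = (∑' j : ℤ × ℤ, ENNReal.ofReal (nz j ^ (2 - 2*r))) ^ ((1:ℝ)/2) * S s t a := by
        rw [sum_W_sq hs0 t a]
        congr 2
        refine tsum_congr fun j => ?_
        by_cases hj : j = 0
        · subst hj
          rw [nz_zero, Real.zero_rpow (show (1:ℝ) - r ≠ 0 by
              intro h; rw [sub_eq_zero] at h; linarith),
            Real.zero_rpow (show (2:ℝ) - 2*r ≠ 0 by intro h; nlinarith)]
          simp
        · have h0 : 0 < nz j := lt_of_lt_of_le one_pos (one_le_nz hj)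
          rw [← ENNReal.ofReal_pow (by positivity), pow_two,
            rpow_combine h0 (show (1:ℝ) - r + (1 - r) = 2 - 2*r by ring)]

/-! ### Pointwise bound on the summand -/

lemma ofreal_expand (C0 q1 q2 p1 p2 t : ℝ) (hC0 : 0 ≤ C0) (hq1 : 0 ≤ q1)
    (hq2 : 0 ≤ q2) (hp1 : 0 ≤ p1) (hp2 : 0 ≤ p2) (ht : 0 ≤ t) (A : ℝ≥0∞) :
    ENNReal.ofReal (C0 * ((q1 + q2) + t * (p1 + p2))) * A
      = ENNReal.ofReal C0 * (ENNReal.ofReal q1 * A + ENNReal.ofReal q2 * A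
          + ENNReal.ofReal t * (ENNReal.ofReal p1 * A)
          + ENNReal.ofReal t * (ENNReal.ofReal p2 * A)) := by
  rw [ENNReal.ofReal_mul hC0, ENNReal.ofReal_add (by positivity) (by positivity),
    ENNReal.ofReal_add hq1 hq2, ENNReal.ofReal_mul ht, ENNReal.ofReal_add hp1 hp2]
  ring

lemma summand_bound {r : ℝ} (hr : 2 < r) {τ : ℝ} (hτ : 0 ≤ τ)
    (a b c : ℤ × ℤ → ℝ≥0∞) (j k : ℤ × ℤ) :
    a j * ENNReal.ofReal (nz k) * b k
      * ENNReal.ofReal (nz (j + k) ^ r * Real.exp (τ * nz (j + k)))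
      * c (j + k)
      * ENNReal.ofReal |nz (j + k) ^ r * Real.exp (τ * nz (j + k))
          - nz k ^ r * Real.exp (τ * nz k)|
    ≤ ENNReal.ofReal (10 * r * 2 ^ (r + 2)) *
      ( (W 1 0 j * a j) * (W r 0 k * b k) * (W r 0 (j+k) * c (j+k))
        + (W r 0 j * a j) * (W 1 0 k * b k) * (W r 0 (j+k) * c (j+k))
        + ENNReal.ofReal τ * ((W (3/2) τ j * a j) * (W (r+1/2) τ k * b k)
            * (W (r+1/2) τ (j+k) * c (j+k)))
        + ENNReal.ofReal τ * ((W (r+1/2) τ j * a j) * (W (3/2) τ k * b k)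
            * (W (r+1/2) τ (j+k) * c (j+k))) ) := by
  by_cases hj : j = 0
  · subst hj
    simp only [zero_add, sub_self, abs_zero, ENNReal.ofReal_zero, mul_zero]
    exact bot_le
  by_cases hk : k = 0
  · subst hk
    simp only [nz_zero, ENNReal.ofReal_zero, mul_zero, zero_mul]
    exact bot_le
  by_cases hjk : j + k = 0
  · rw [hjk, nz_zero, Real.zero_rpow (show r ≠ 0 by linarith), zero_mul,
      ENNReal.ofReal_zero, mul_zero, zero_mul, zero_mul]
    exact bot_le
  · have hx1 : 1 ≤ nz (j + k) := one_le_nz hjk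
    have hy1 : 1 ≤ nz k := one_le_nz hk
    have hz1 : 1 ≤ nz j := one_le_nz hj
    have key := key_pointwise hr hτ hx1 hy1 hz1
      (by linarith [nz_triangle j k]) (nz_triangle' j k) (nz_rev_triangle j k)
    have hxr : (0:ℝ) ≤ nz (j+k) ^ r * Real.exp (τ * nz (j+k)) := by
      apply mul_nonneg (Real.rpow_nonneg (nz_nonneg _) _) (Real.exp_pos _).le
    calc a j * ENNReal.ofReal (nz k) * b k
          * ENNReal.ofReal (nz (j + k) ^ r * Real.exp (τ * nz (j + k)))
          * c (j + k)
          * ENNReal.ofReal |nz (j + k) ^ r * Real.exp (τ * nz (j + k))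
              - nz k ^ r * Real.exp (τ * nz k)|
        = ENNReal.ofReal (nz k * (nz (j+k) ^ r * Real.exp (τ * nz (j+k)))
            * |nz (j + k) ^ r * Real.exp (τ * nz (j + k))
              - nz k ^ r * Real.exp (τ * nz k)|) * (a j * (b k * c (j+k))) := by
          rw [ENNReal.ofReal_mul (mul_nonneg (nz_nonneg _) hxr),
            ENNReal.ofReal_mul (nz_nonneg _)]
          ring
      _ ≤ ENNReal.ofReal ((10 * r * 2 ^ (r + 2)) *
            ((nz j * nz k ^ r * nz (j+k) ^ r + nz j ^ r * nz k * nz (j+k) ^ r)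
              + τ * ((nz j ^ (3/2:ℝ) * Real.exp (τ * nz j))
                    * (nz k ^ (r + 1/2) * Real.exp (τ * nz k))
                    * (nz (j+k) ^ (r + 1/2) * Real.exp (τ * nz (j+k)))
                  + (nz j ^ (r + 1/2) * Real.exp (τ * nz j))
                    * (nz k ^ (3/2:ℝ) * Real.exp (τ * nz k))
                    * (nz (j+k) ^ (r + 1/2) * Real.exp (τ * nz (j+k))))))
            * (a j * (b k * c (j+k))) :=
          mul_le_mul_left (ENNReal.ofReal_le_ofReal key) _
      _ = _ := by
          rw [ofreal_expand _ _ _ _ _ _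
            (by positivity)
            (by positivity)
            (mul_nonneg (mul_nonneg (Real.rpow_nonneg (nz_nonneg _) _) (nz_nonneg _))
              (Real.rpow_nonneg (nz_nonneg _) _))
            (by positivity)
            (by positivity)
            hτ]
          have W1j : W 1 0 j = ENNReal.ofReal (nz j) := by
            rw [W, Real.rpow_one, zero_mul, Real.exp_zero, mul_one]
          have W1k : W 1 0 k = ENNReal.ofReal (nz k) := by
            rw [W, Real.rpow_one, zero_mul, Real.exp_zero, mul_one]
          have Wrj : W r 0 j = ENNReal.ofReal (nz j ^ r) := by
            rw [W, zero_mul, Real.exp_zero, mul_one]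
          have Wrk : W r 0 k = ENNReal.ofReal (nz k ^ r) := by
            rw [W, zero_mul, Real.exp_zero, mul_one]
          have Wrjk : W r 0 (j+k) = ENNReal.ofReal (nz (j+k) ^ r) := by
            rw [W, zero_mul, Real.exp_zero, mul_one]
          congr 1
          have e1 : ENNReal.ofReal (nz j * nz k ^ r * nz (j+k) ^ r)
              * (a j * (b k * c (j+k)))
              = (W 1 0 j * a j) * (W r 0 k * b k) * (W r 0 (j+k) * c (j+k)) := by
            rw [W1j, Wrk, Wrjk,
              ENNReal.ofReal_mul (mul_nonneg (nz_nonneg _) (Real.rpow_nonneg (nz_nonneg _) _)),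
              ENNReal.ofReal_mul (nz_nonneg _)]
            ring
          have e2 : ENNReal.ofReal (nz j ^ r * nz k * nz (j+k) ^ r)
              * (a j * (b k * c (j+k)))
              = (W r 0 j * a j) * (W 1 0 k * b k) * (W r 0 (j+k) * c (j+k)) := by
            rw [Wrj, W1k, Wrjk,
              ENNReal.ofReal_mul (mul_nonneg (Real.rpow_nonneg (nz_nonneg _) _) (nz_nonneg _)),
              ENNReal.ofReal_mul (Real.rpow_nonneg (nz_nonneg _) _)]
            ring
          have e3 : ENNReal.ofReal ((nz j ^ (3/2:ℝ) * Real.exp (τ * nz j))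
                * (nz k ^ (r + 1/2) * Real.exp (τ * nz k))
                * (nz (j+k) ^ (r + 1/2) * Real.exp (τ * nz (j+k))))
              * (a j * (b k * c (j+k)))
              = (W (3/2) τ j * a j) * (W (r+1/2) τ k * b k)
                  * (W (r+1/2) τ (j+k) * c (j+k)) := by
            rw [W, W, W,
              ENNReal.ofReal_mul (by positivity),
              ENNReal.ofReal_mul (by positivity)]
            ring
          have e4 : ENNReal.ofReal ((nz j ^ (r + 1/2) * Real.exp (τ * nz j))
                * (nz k ^ (3/2:ℝ) * Real.exp (τ * nz k))
                * (nz (j+k) ^ (r + 1/2) * Real.exp (τ * nz (j+k))))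
              * (a j * (b k * c (j+k)))
              = (W (r+1/2) τ j * a j) * (W (3/2) τ k * b k)
                  * (W (r+1/2) τ (j+k) * c (j+k)) := by
            rw [W, W, W,
              ENNReal.ofReal_mul (by positivity),
              ENNReal.ofReal_mul (by positivity)]
            ring
          rw [e1, e2, e3, e4]

end CommutatorAux

open CommutatorAux

/-- Fourier-coefficient form of the commutator estimate
`|⟨A^r e^{τA}(f·∇g), A^r e^{τA}h⟩ − ⟨f·∇A^r e^{τA}g, A^r e^{τA}h⟩|` of Lemma A.4. -/
theorem commutator_transport_estimate :
    ∀ r : ℝ, 2 < r → ∃ C : ℝ, 0 < C ∧ ∀ τ : ℝ, 0 ≤ τ → ∀ a b c : ℤ × ℤ → ℝ≥0∞,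
      (∑' p : (ℤ × ℤ) × (ℤ × ℤ),
          a p.1 * ENNReal.ofReal (nz p.2) * b p.2
            * ENNReal.ofReal (nz (p.1 + p.2) ^ r * Real.exp (τ * nz (p.1 + p.2)))
            * c (p.1 + p.2)
            * ENNReal.ofReal |nz (p.1 + p.2) ^ r * Real.exp (τ * nz (p.1 + p.2))
                - nz p.2 ^ r * Real.exp (τ * nz p.2)|)
        ≤ ENNReal.ofReal C *
            (S r 0 a * S r 0 b * S r 0 c
              + ENNReal.ofReal τ * S (r + 1 / 2) τ a * S (r + 1 / 2) τ b
                  * S (r + 1 / 2) τ c) := by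
  intro r hr
  have hM : (∑' j : ℤ × ℤ, ENNReal.ofReal (nz j ^ (2 - 2*r))) < ⊤ :=
    lattice_sum_lt_top (by linarith)
  have hKne : (∑' j : ℤ × ℤ, ENNReal.ofReal (nz j ^ (2 - 2*r))) ^ ((1:ℝ)/2) ≠ ⊤ :=
    ENNReal.rpow_ne_top_of_nonneg (by norm_num) hM.ne
  set K : ℝ≥0∞ := (∑' j : ℤ × ℤ, ENNReal.ofReal (nz j ^ (2 - 2*r))) ^ ((1:ℝ)/2) with hK
  have hC0 : (0:ℝ) < 10 * r * 2 ^ (r + 2) :=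
    mul_pos (mul_pos (by norm_num) (by linarith)) (Real.rpow_pos_of_pos two_pos _)
  refine ⟨10 * r * 2 ^ (r + 2) * (K.toReal + 1) * 2, ⟨?_, ?_⟩⟩
  · have h1 : (0:ℝ) ≤ K.toReal := ENNReal.toReal_nonneg
    nlinarith
  intro τ hτ a b c
  have hKle : K ≤ ENNReal.ofReal (K.toReal + 1) := by
    calc K = ENNReal.ofReal K.toReal := (ENNReal.ofReal_toReal hKne).symm
      _ ≤ ENNReal.ofReal (K.toReal + 1) := ENNReal.ofReal_le_ofReal (by linarith)
  have hr0 : (0:ℝ) < r := by linarith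
  have hr12 : (0:ℝ) < r + 1/2 := by linarith
  -- the four trilinear sums
  have hsig1 : (∑' p : (ℤ × ℤ) × (ℤ × ℤ),
        (W 1 0 p.1 * a p.1) * (W r 0 p.2 * b p.2) * (W r 0 (p.1+p.2) * c (p.1+p.2)))
      ≤ (K * S r 0 a) * (S r 0 b * S r 0 c) := by
    refine (tri1 (fun m => W 1 0 m * a m) (fun m => W r 0 m * b m)
      (fun m => W r 0 m * c m)).trans ?_
    rw [sum_W_sq hr0 0 b, sum_W_sq hr0 0 c]
    exact mul_le_mul_left (l1_gen hr one_pos (by ring) a) _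
  have hsig2 : (∑' p : (ℤ × ℤ) × (ℤ × ℤ),
        (W r 0 p.1 * a p.1) * (W 1 0 p.2 * b p.2) * (W r 0 (p.1+p.2) * c (p.1+p.2)))
      ≤ (K * S r 0 b) * (S r 0 a * S r 0 c) := by
    refine (tri2 (fun m => W r 0 m * a m) (fun m => W 1 0 m * b m)
      (fun m => W r 0 m * c m)).trans ?_
    rw [sum_W_sq hr0 0 a, sum_W_sq hr0 0 c]
    exact mul_le_mul_left (l1_gen hr one_pos (by ring) b) _
  have hsig3 : (∑' p : (ℤ × ℤ) × (ℤ × ℤ),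
        (W (3/2) τ p.1 * a p.1) * (W (r+1/2) τ p.2 * b p.2)
          * (W (r+1/2) τ (p.1+p.2) * c (p.1+p.2)))
      ≤ (K * S (r+1/2) τ a) * (S (r+1/2) τ b * S (r+1/2) τ c) := by
    refine (tri1 (fun m => W (3/2) τ m * a m) (fun m => W (r+1/2) τ m * b m)
      (fun m => W (r+1/2) τ m * c m)).trans ?_
    rw [sum_W_sq hr12 τ b, sum_W_sq hr12 τ c]
    exact mul_le_mul_left (l1_gen hr (by norm_num) (by ring) a) _
  have hsig4 : (∑' p : (ℤ × ℤ) × (ℤ × ℤ),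
        (W (r+1/2) τ p.1 * a p.1) * (W (3/2) τ p.2 * b p.2)
          * (W (r+1/2) τ (p.1+p.2) * c (p.1+p.2)))
      ≤ (K * S (r+1/2) τ b) * (S (r+1/2) τ a * S (r+1/2) τ c) := by
    refine (tri2 (fun m => W (r+1/2) τ m * a m) (fun m => W (3/2) τ m * b m)
      (fun m => W (r+1/2) τ m * c m)).trans ?_
    rw [sum_W_sq hr12 τ a, sum_W_sq hr12 τ c]
    exact mul_le_mul_left (l1_gen hr (by norm_num) (by ring) b) _
  calc (∑' p : (ℤ × ℤ) × (ℤ × ℤ),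
          a p.1 * ENNReal.ofReal (nz p.2) * b p.2
            * ENNReal.ofReal (nz (p.1 + p.2) ^ r * Real.exp (τ * nz (p.1 + p.2)))
            * c (p.1 + p.2)
            * ENNReal.ofReal |nz (p.1 + p.2) ^ r * Real.exp (τ * nz (p.1 + p.2))
                - nz p.2 ^ r * Real.exp (τ * nz p.2)|)
      ≤ ∑' p : (ℤ × ℤ) × (ℤ × ℤ), ENNReal.ofReal (10 * r * 2 ^ (r + 2)) *
          ( (W 1 0 p.1 * a p.1) * (W r 0 p.2 * b p.2) * (W r 0 (p.1+p.2) * c (p.1+p.2))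
            + (W r 0 p.1 * a p.1) * (W 1 0 p.2 * b p.2) * (W r 0 (p.1+p.2) * c (p.1+p.2))
            + ENNReal.ofReal τ * ((W (3/2) τ p.1 * a p.1) * (W (r+1/2) τ p.2 * b p.2)
                * (W (r+1/2) τ (p.1+p.2) * c (p.1+p.2)))
            + ENNReal.ofReal τ * ((W (r+1/2) τ p.1 * a p.1) * (W (3/2) τ p.2 * b p.2)
                * (W (r+1/2) τ (p.1+p.2) * c (p.1+p.2))) ) :=
        ENNReal.tsum_le_tsum (fun p => summand_bound hr hτ a b c p.1 p.2)
    _ = ENNReal.ofReal (10 * r * 2 ^ (r + 2)) *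
          ( (∑' p : (ℤ × ℤ) × (ℤ × ℤ),
              (W 1 0 p.1 * a p.1) * (W r 0 p.2 * b p.2) * (W r 0 (p.1+p.2) * c (p.1+p.2)))
            + (∑' p : (ℤ × ℤ) × (ℤ × ℤ),
              (W r 0 p.1 * a p.1) * (W 1 0 p.2 * b p.2) * (W r 0 (p.1+p.2) * c (p.1+p.2)))
            + ENNReal.ofReal τ * (∑' p : (ℤ × ℤ) × (ℤ × ℤ),
              (W (3/2) τ p.1 * a p.1) * (W (r+1/2) τ p.2 * b p.2)
                * (W (r+1/2) τ (p.1+p.2) * c (p.1+p.2)))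
            + ENNReal.ofReal τ * (∑' p : (ℤ × ℤ) × (ℤ × ℤ),
              (W (r+1/2) τ p.1 * a p.1) * (W (3/2) τ p.2 * b p.2)
                * (W (r+1/2) τ (p.1+p.2) * c (p.1+p.2))) ) := by
        rw [ENNReal.tsum_mul_left]
        congr 1
        rw [ENNReal.tsum_add, ENNReal.tsum_add, ENNReal.tsum_add,
          ENNReal.tsum_mul_left, ENNReal.tsum_mul_left]
    _ ≤ ENNReal.ofReal (10 * r * 2 ^ (r + 2)) *
          ( (K * S r 0 a) * (S r 0 b * S r 0 c)
            + (K * S r 0 b) * (S r 0 a * S r 0 c)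
            + ENNReal.ofReal τ * ((K * S (r+1/2) τ a) * (S (r+1/2) τ b * S (r+1/2) τ c))
            + ENNReal.ofReal τ * ((K * S (r+1/2) τ b) * (S (r+1/2) τ a * S (r+1/2) τ c)) ) := by
        apply mul_le_mul_right
        exact add_le_add (add_le_add (add_le_add hsig1 hsig2)
          (mul_le_mul_right hsig3 _)) (mul_le_mul_right hsig4 _)
    _ = ENNReal.ofReal (10 * r * 2 ^ (r + 2)) *
          (K * (2 * (S r 0 a * S r 0 b * S r 0 c
            + ENNReal.ofReal τ * S (r+1/2) τ a * S (r+1/2) τ b * S (r+1/2) τ c))) := by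
        ring
    _ ≤ ENNReal.ofReal (10 * r * 2 ^ (r + 2)) *
          (ENNReal.ofReal (K.toReal + 1) * (2 * (S r 0 a * S r 0 b * S r 0 c
            + ENNReal.ofReal τ * S (r+1/2) τ a * S (r+1/2) τ b * S (r+1/2) τ c))) := by
        exact mul_le_mul_right (mul_le_mul_left hKle _) _
    _ = ENNReal.ofReal (10 * r * 2 ^ (r + 2) * (K.toReal + 1) * 2) *
          (S r 0 a * S r 0 b * S r 0 c
            + ENNReal.ofReal τ * S (r+1/2) τ a * S (r+1/2) τ b * S (r+1/2) τ c) := by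
        rw [ENNReal.ofReal_mul (mul_nonneg hC0.le (by positivity)),
          ENNReal.ofReal_mul hC0.le, ENNReal.ofReal_ofNat]
        ring


end
end

section
/- For every real r > 2 there exists a constant C_r > 0 such that for every τ ≥ 0 and all a, b, c : ℤ² → [0,∞]: ∑_{(j,k)∈ℤ²×ℤ²} ‖j‖ · a(j) · b(k) · ‖j+k‖^{r} e^{τ‖j+k‖} · c(j+k) · | ‖j+k‖^{r} e^{τ‖j+k‖} − ‖j‖^{r} e^{τ‖j‖} | ≤ C_r [ S_{r,0}(a) · S_{r,0}(b) · S_{r,0}(c) + τ · S_{r+1/2,τ}(a) · S_{r+1/2,τ}(b) · S_{r+1/2,τ}(c) ], where S_{ρ,0} denotes the weighted ℓ²-norm with τ = 0 (no exponential weight). (This is the Fourier-coefficient form of the commutator estimate |⟨A^r e^{τA}((∇·f)g), A^r e^{τA}h⟩ − ⟨(∇·A^r e^{τA}f)g, A^r e^{τA}h⟩| of Lemma A.5.) -/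
open scoped ENNReal

noncomputable section

set_option maxHeartbeats 1000000

open MeasureTheory

lemma nz_nonneg (m : ℤ × ℤ) : 0 ≤ nz m := Real.sqrt_nonneg _

lemma nz_eq_abs (m : ℤ × ℤ) : nz m = ‖(⟨(m.1 : ℝ), (m.2 : ℝ)⟩ : ℂ)‖ := by
  rw [Complex.norm_def, Complex.normSq_apply, nz]
  norm_num; ring_nf

lemma nz_add_le (j k : ℤ × ℤ) : nz (j + k) ≤ nz j + nz k := by
  rw [nz_eq_abs, nz_eq_abs, nz_eq_abs]
  have : (⟨((j+k).1 : ℝ), ((j+k).2 : ℝ)⟩ : ℂ) = ⟨(j.1:ℝ), (j.2:ℝ)⟩ + ⟨(k.1:ℝ), (k.2:ℝ)⟩ := by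
    simp [Complex.ext_iff]
  rw [this]; exact norm_add_le _ _

lemma nz_neg (m : ℤ × ℤ) : nz (-m) = nz m := by
  simp [nz]

lemma nz_zero : nz 0 = 0 := by simp [nz]

lemma nz_sub_le (j k : ℤ × ℤ) : nz j ≤ nz (j + k) + nz k := by
  have := nz_add_le (j + k) (-k)
  simpa [nz_neg] using this

lemma one_le_nz {m : ℤ × ℤ} (h : m ≠ 0) : 1 ≤ nz m := by
  rw [nz, show (1:ℝ) = Real.sqrt 1 by simp]
  apply Real.sqrt_le_sqrt
  have : m.1 ≠ 0 ∨ m.2 ≠ 0 := by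
    by_contra hc; push_neg at hc; exact h (Prod.ext hc.1 hc.2)
  rcases this with h1 | h1
  · have : 1 ≤ |m.1| := Int.one_le_abs h1
    have : (1:ℝ) ≤ (m.1:ℝ)^2 := by
      have := sq_abs m.1 ▸ (one_le_pow_iff_of_nonneg (abs_nonneg m.1) two_ne_zero).mpr this
      exact_mod_cast (by nlinarith [this, sq_abs m.1] : (1:ℤ) ≤ m.1 ^ 2)
    nlinarith [sq_nonneg ((m.2:ℝ))]
  · have : 1 ≤ |m.2| := Int.one_le_abs h1
    have : (1:ℝ) ≤ (m.2:ℝ)^2 := by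
      exact_mod_cast (by nlinarith [this, sq_abs m.2] : (1:ℤ) ≤ m.2 ^ 2)
    nlinarith [sq_nonneg ((m.1:ℝ))]

-- summability
lemma summable_nz_rpow {s : ℝ} (hs : 2 < s) : Summable (fun m : ℤ × ℤ => nz m ^ (-s)) := by
  have h1 : Summable fun (x : Fin 2 → ℤ) ↦ ‖x‖ ^ (-s) :=
    EisensteinSeries.summable_one_div_norm_rpow hs
  have h2 : Summable fun (p : ℤ × ℤ) => ‖(finTwoArrowEquiv ℤ).symm p‖ ^ (-s) :=
    ((finTwoArrowEquiv ℤ).symm.summable_iff).mpr h1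
  apply h2.of_nonneg_of_le (fun m => Real.rpow_nonneg (nz_nonneg m) _)
  intro m
  rcases eq_or_ne m 0 with rfl | hm
  · simp only [nz_zero, Real.zero_rpow (by linarith : -s ≠ 0)]
    positivity
  · apply Real.rpow_le_rpow_of_nonpos
    · -- 0 < ‖(finTwoArrowEquiv ℤ).symm m‖
      simp only [finTwoArrowEquiv_symm_apply]
      rw [norm_pos_iff]
      intro hc
      apply hm
      have h0 := congrFun hc 0
      have h1 := congrFun hc 1
      simp at h0 h1
      exact Prod.ext h0 h1
    · -- ‖..‖ ≤ nz m
      apply pi_norm_le_iff_of_nonneg (nz_nonneg m) |>.mpr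
      intro i
      fin_cases i <;> simp [finTwoArrowEquiv_symm_apply, Int.norm_eq_abs, nz]
      · rw [show |(m.1:ℝ)| = Real.sqrt ((m.1:ℝ)^2) by rw [Real.sqrt_sq_eq_abs]]
        exact Real.sqrt_le_sqrt (by nlinarith [sq_nonneg ((m.2:ℝ))])
      · rw [show |(m.2:ℝ)| = Real.sqrt ((m.2:ℝ)^2) by rw [Real.sqrt_sq_eq_abs]]
        exact Real.sqrt_le_sqrt (by nlinarith [sq_nonneg ((m.1:ℝ))])
    · linarith

lemma enn_cs (f g : ℤ × ℤ → ℝ≥0∞) : ∑' m, f m * g m ≤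
    (∑' m, f m ^ 2) ^ ((1:ℝ)/2) * (∑' m, g m ^ 2) ^ ((1:ℝ)/2) := by
  have hpq : (2:ℝ).HolderConjugate 2 := Real.HolderConjugate.two_two
  have h := ENNReal.lintegral_mul_le_Lp_mul_Lq (Measure.count : Measure (ℤ×ℤ)) hpq
    (measurable_of_countable f).aemeasurable (measurable_of_countable g).aemeasurable
  simp only [lintegral_count] at h
  calc ∑' m, f m * g m ≤ (∑' m, f m ^ (2:ℝ)) ^ ((1:ℝ)/2) * (∑' m, g m ^ (2:ℝ)) ^ ((1:ℝ)/2) := h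
    _ = (∑' m, f m ^ 2) ^ ((1:ℝ)/2) * (∑' m, g m ^ 2) ^ ((1:ℝ)/2) := by
        congr 1 <;> congr 1 <;> exact tsum_congr fun m => by
          rw [show ((2:ℝ)) = ((2:ℕ):ℝ) by norm_num, ENNReal.rpow_natCast]

lemma tsum_translate (h : ℤ × ℤ → ℝ≥0∞) (j : ℤ × ℤ) : ∑' k, h (j + k) = ∑' m, h m := by
  simpa using (Equiv.addLeft j).tsum_eq h

lemma tsum_translate' (h : ℤ × ℤ → ℝ≥0∞) (k : ℤ × ℤ) : ∑' j, h (j + k) = ∑' m, h m := by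
  simpa using (Equiv.addRight k).tsum_eq h

/-- master lemma, weight on the first variable -/
lemma master1 (w F G H : ℤ × ℤ → ℝ≥0∞) :
    (∑' p : (ℤ × ℤ) × (ℤ × ℤ), w p.1 * (F p.1 * G p.2 * H (p.1 + p.2)))
      ≤ (∑' m, w m ^ 2) ^ ((1:ℝ)/2) * ((∑' m, F m ^ 2) ^ ((1:ℝ)/2) *
        ((∑' m, G m ^ 2) ^ ((1:ℝ)/2) * (∑' m, H m ^ 2) ^ ((1:ℝ)/2))) := by
  rw [ENNReal.tsum_prod']
  calc ∑' j, ∑' k, w j * (F j * G k * H (j + k))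
      = ∑' j, w j * F j * ∑' k, G k * H (j + k) := by
        refine tsum_congr fun j => ?_
        rw [show (∑' k, w j * (F j * G k * H (j + k)))
            = ∑' k, (w j * F j) * (G k * H (j + k)) from tsum_congr fun k => by ring,
          ENNReal.tsum_mul_left]
    _ ≤ ∑' j, w j * F j * ((∑' m, G m ^ 2) ^ ((1:ℝ)/2) * (∑' m, H m ^ 2) ^ ((1:ℝ)/2)) := by
        refine ENNReal.tsum_le_tsum fun j => ?_
        refine mul_le_mul_right ?_ _
        calc ∑' k, G k * H (j + k)
            ≤ (∑' m, G m ^ 2) ^ ((1:ℝ)/2) * (∑' k, H (j + k) ^ 2) ^ ((1:ℝ)/2) :=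
              enn_cs G (fun k => H (j + k))
          _ = (∑' m, G m ^ 2) ^ ((1:ℝ)/2) * (∑' m, H m ^ 2) ^ ((1:ℝ)/2) := by
              rw [tsum_translate (fun m => H m ^ 2) j]
    _ = (∑' j, w j * F j) * ((∑' m, G m ^ 2) ^ ((1:ℝ)/2) * (∑' m, H m ^ 2) ^ ((1:ℝ)/2)) :=
        ENNReal.tsum_mul_right
    _ ≤ ((∑' m, w m ^ 2) ^ ((1:ℝ)/2) * (∑' m, F m ^ 2) ^ ((1:ℝ)/2)) *
        ((∑' m, G m ^ 2) ^ ((1:ℝ)/2) * (∑' m, H m ^ 2) ^ ((1:ℝ)/2)) :=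
        mul_le_mul_left (enn_cs w F) _
    _ = _ := by ring

/-- master lemma, weight on the second variable -/
lemma master2 (w F G H : ℤ × ℤ → ℝ≥0∞) :
    (∑' p : (ℤ × ℤ) × (ℤ × ℤ), w p.2 * (F p.1 * G p.2 * H (p.1 + p.2)))
      ≤ (∑' m, w m ^ 2) ^ ((1:ℝ)/2) * ((∑' m, F m ^ 2) ^ ((1:ℝ)/2) *
        ((∑' m, G m ^ 2) ^ ((1:ℝ)/2) * (∑' m, H m ^ 2) ^ ((1:ℝ)/2))) := by
  rw [ENNReal.tsum_prod', ENNReal.tsum_comm]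
  calc ∑' k, ∑' j, w k * (F j * G k * H (j + k))
      = ∑' k, w k * G k * ∑' j, F j * H (j + k) := by
        refine tsum_congr fun k => ?_
        rw [show (∑' j, w k * (F j * G k * H (j + k)))
            = ∑' j, (w k * G k) * (F j * H (j + k)) from tsum_congr fun j => by ring,
          ENNReal.tsum_mul_left]
    _ ≤ ∑' k, w k * G k * ((∑' m, F m ^ 2) ^ ((1:ℝ)/2) * (∑' m, H m ^ 2) ^ ((1:ℝ)/2)) := by
        refine ENNReal.tsum_le_tsum fun k => ?_
        refine mul_le_mul_right ?_ _
        calc ∑' j, F j * H (j + k)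
            ≤ (∑' m, F m ^ 2) ^ ((1:ℝ)/2) * (∑' j, H (j + k) ^ 2) ^ ((1:ℝ)/2) :=
              enn_cs F (fun j => H (j + k))
          _ = (∑' m, F m ^ 2) ^ ((1:ℝ)/2) * (∑' m, H m ^ 2) ^ ((1:ℝ)/2) := by
              rw [tsum_translate' (fun m => H m ^ 2) k]
    _ = (∑' k, w k * G k) * ((∑' m, F m ^ 2) ^ ((1:ℝ)/2) * (∑' m, H m ^ 2) ^ ((1:ℝ)/2)) :=
        ENNReal.tsum_mul_right
    _ ≤ ((∑' m, w m ^ 2) ^ ((1:ℝ)/2) * (∑' m, G m ^ 2) ^ ((1:ℝ)/2)) *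
        ((∑' m, F m ^ 2) ^ ((1:ℝ)/2) * (∑' m, H m ^ 2) ^ ((1:ℝ)/2)) :=
        mul_le_mul_left (enn_cs w G) _
    _ = _ := by ring

section RealLemmas
open Real

/-- weight absorption: `z * W ≤ (y^(1-r)+z^(1-r)) * (z^s * W)` for `1 ≤ z`, `r ≤ s`. -/
lemma CDE_wa {r s y z W : ℝ} (h0y : 0 < y) (hz : 1 ≤ z) (hrs : r ≤ s) (hW : 0 ≤ W) :
    z * W ≤ (y ^ (1 - r) + z ^ (1 - r)) * (z ^ s * W) := by
  have h0z : (0:ℝ) < z := by linarith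
  have h1 : z ≤ z ^ (1 - r) * z ^ s := by
    rw [← Real.rpow_add h0z]
    calc z = z ^ (1:ℝ) := (Real.rpow_one z).symm
      _ ≤ z ^ (1 - r + s) := Real.rpow_le_rpow_of_exponent_le hz (by linarith)
  have h2 : z * W ≤ (z ^ (1 - r) * z ^ s) * W := mul_le_mul_of_nonneg_right h1 hW
  have h3 : 0 ≤ y ^ (1 - r) * (z ^ s * W) :=
    mul_nonneg (Real.rpow_nonneg h0y.le _) (mul_nonneg (Real.rpow_nonneg h0z.le _) hW)
  nlinarith [h2, h3]

lemma CDE_wa' {r s y z W : ℝ} (h0z : 0 < z) (hy : 1 ≤ y) (hrs : r ≤ s) (hW : 0 ≤ W) :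
    y * W ≤ (y ^ (1 - r) + z ^ (1 - r)) * (y ^ s * W) := by
  have := CDE_wa (r := r) (s := s) (y := z) (z := y) h0z hy hrs hW
  rw [add_comm (z ^ (1-r)) (y ^ (1-r))] at this
  exact this

lemma CDE_mvt {r x y : ℝ} (hr : 1 ≤ r) (hy : 0 ≤ y) (hxy : y ≤ x) :
    x ^ r - y ^ r ≤ r * x ^ (r - 1) * (x - y) := by
  rcases eq_or_lt_of_le hxy with h | h
  · subst h; simp
  · have hx : 0 ≤ x := hy.trans (le_of_lt h)
    obtain ⟨c, hc, hc'⟩ := exists_hasDerivAt_eq_slope (fun t => t ^ r) (fun t => r * t ^ (r - 1)) h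
      (fun t ht => (Real.continuousAt_rpow_const t r (Or.inr (by linarith))).continuousWithinAt)
      (fun t ht => Real.hasDerivAt_rpow_const (Or.inl (by rcases ht with ⟨h1, h2⟩; nlinarith)))
    have hcx : c ^ (r-1) ≤ x ^ (r-1) :=
      Real.rpow_le_rpow (by rcases hc with ⟨h1,h2⟩; linarith) (hc.2.le) (by linarith)
    have hslope : (x ^ r - y ^ r) / (x - y) = r * c ^ (r-1) := hc'.symm
    have hxy' : 0 < x - y := by linarith
    rw [div_eq_iff hxy'.ne'] at hslope
    rw [hslope]
    have h0r : 0 ≤ r := by linarith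
    nlinarith [hcx, mul_le_mul_of_nonneg_right (mul_le_mul_of_nonneg_left hcx h0r) hxy'.le]

lemma CDE_exp_mvt {t x y : ℝ} (ht : 0 ≤ t) (hxy : y ≤ x) :
    Real.exp (t*x) - Real.exp (t*y) ≤ t * (x - y) * Real.exp (t*x) := by
  have h1 : Real.exp (t*y) = Real.exp (t*x) * Real.exp (-(t*(x-y))) := by
    rw [← Real.exp_add]; ring_nf
  have h2 := Real.add_one_le_exp (-(t*(x-y)))
  nlinarith [Real.exp_pos (t*x), mul_nonneg ht (sub_nonneg.mpr hxy)]

lemma CDE_exp_self {t : ℝ} : Real.exp t ≤ 1 + t * Real.exp t := by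
  have h2 := Real.add_one_le_exp (-t)
  have h3 : Real.exp (-t) * Real.exp t = 1 := by rw [← Real.exp_add]; simp
  nlinarith [Real.exp_pos t, Real.exp_pos (-t)]

end RealLemmas

section Kernels
open Real

variable {r y z x : ℝ}

lemma CDE_ker0 (hr : 2 < r) (hy : 1 ≤ y) (hz : 1 ≤ z) (hx : 1 ≤ x)
    (hxyz : x ≤ y + z) :
    r * (z * ((max x y) ^ (r-1) * (y * x ^ r)))
      ≤ (y ^ (1-r) + z ^ (1-r)) * ((r * 2 ^ r) * (y ^ r * (z ^ r * x ^ r))) := by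
  have h0y : (0:ℝ) < y := by linarith
  have h0z : (0:ℝ) < z := by linarith
  have h0x : (0:ℝ) < x := by linarith
  have hM0 : (0:ℝ) ≤ max x y := le_trans h0x.le (le_max_left x y)
  have h0r : (0:ℝ) ≤ r := by linarith
  have h2r : (2:ℝ) ^ r = 2 ^ (r-1) * 2 := by
    rw [← Real.rpow_add_one (by norm_num : (2:ℝ) ≠ 0) (r-1)]; norm_num
  have hK0 : (0:ℝ) ≤ y ^ (1-r) + z ^ (1-r) := by positivity
  rcases le_total z y with hzy | hyz
  · have hM2 : max x y ≤ 2 * y := max_le (by linarith) (by linarith)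
    have hMr : (max x y) ^ (r-1) ≤ 2 ^ (r-1) * y ^ (r-1) := by
      calc (max x y) ^ (r-1) ≤ (2*y) ^ (r-1) := Real.rpow_le_rpow hM0 hM2 (by linarith)
        _ = 2 ^ (r-1) * y ^ (r-1) := Real.mul_rpow (by norm_num) h0y.le
    have hyy : y ^ (r-1) * y = y ^ r := by
      rw [← Real.rpow_add_one h0y.ne' (r-1)]; norm_num
    have step1 : r * (z * ((max x y) ^ (r-1) * (y * x ^ r)))
        ≤ r * (z * ((2 ^ (r-1) * y ^ (r-1)) * (y * x ^ r))) := by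
      gcongr <;> first | positivity | linarith
    have step2 : r * (z * ((2 ^ (r-1) * y ^ (r-1)) * (y * x ^ r)))
        = 2 ^ (r-1) * r * (z * (y ^ r * x ^ r)) := by
      linear_combination (2 ^ (r-1) * r * z * x ^ r) * hyy
    have step3 : z * (y ^ r * x ^ r)
        ≤ (y ^ (1-r) + z ^ (1-r)) * (z ^ r * (y ^ r * x ^ r)) :=
      CDE_wa h0y hz le_rfl (by positivity)
    have step4 := mul_le_mul_of_nonneg_left step3
      (mul_nonneg (Real.rpow_nonneg (by norm_num : (0:ℝ) ≤ 2) (r-1)) h0r)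
    have hnn : 0 ≤ 2 ^ (r-1) * r * ((y ^ (1-r) + z ^ (1-r)) * (z ^ r * (y ^ r * x ^ r))) :=
      mul_nonneg (mul_nonneg (by positivity) h0r) (by positivity)
    have efin : (y ^ (1-r) + z ^ (1-r)) * ((r * 2 ^ r) * (y ^ r * (z ^ r * x ^ r)))
        = 2 * (2 ^ (r-1) * r * ((y ^ (1-r) + z ^ (1-r)) * (z ^ r * (y ^ r * x ^ r)))) := by
      linear_combination ((y ^ (1-r) + z ^ (1-r)) * r * (y ^ r * (z ^ r * x ^ r))) * h2r
    nlinarith [step1, step2, step4, hnn, efin]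
  · have hM2 : max x y ≤ 2 * z := max_le (by linarith) (by linarith)
    have hMr : (max x y) ^ (r-1) ≤ 2 ^ (r-1) * z ^ (r-1) := by
      calc (max x y) ^ (r-1) ≤ (2*z) ^ (r-1) := Real.rpow_le_rpow hM0 hM2 (by linarith)
        _ = 2 ^ (r-1) * z ^ (r-1) := Real.mul_rpow (by norm_num) h0z.le
    have hzz : z ^ (r-1) * z = z ^ r := by
      rw [← Real.rpow_add_one h0z.ne' (r-1)]; norm_num
    have step1 : r * (z * ((max x y) ^ (r-1) * (y * x ^ r)))
        ≤ r * (z * ((2 ^ (r-1) * z ^ (r-1)) * (y * x ^ r))) := by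
      gcongr <;> first | positivity | linarith
    have step2 : r * (z * ((2 ^ (r-1) * z ^ (r-1)) * (y * x ^ r)))
        = 2 ^ (r-1) * r * (y * (z ^ r * x ^ r)) := by
      linear_combination (2 ^ (r-1) * r * y * x ^ r) * hzz
    have step3 : y * (z ^ r * x ^ r)
        ≤ (y ^ (1-r) + z ^ (1-r)) * (y ^ r * (z ^ r * x ^ r)) :=
      CDE_wa' h0z hy le_rfl (by positivity)
    have step4 := mul_le_mul_of_nonneg_left step3
      (mul_nonneg (Real.rpow_nonneg (by norm_num : (0:ℝ) ≤ 2) (r-1)) h0r)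
    have hnn : 0 ≤ 2 ^ (r-1) * r * ((y ^ (1-r) + z ^ (1-r)) * (y ^ r * (z ^ r * x ^ r))) :=
      mul_nonneg (mul_nonneg (by positivity) h0r) (by positivity)
    have efin : (y ^ (1-r) + z ^ (1-r)) * ((r * 2 ^ r) * (y ^ r * (z ^ r * x ^ r)))
        = 2 * (2 ^ (r-1) * r * ((y ^ (1-r) + z ^ (1-r)) * (y ^ r * (z ^ r * x ^ r)))) := by
      linear_combination ((y ^ (1-r) + z ^ (1-r)) * r * (y ^ r * (z ^ r * x ^ r))) * h2r
    nlinarith [step1, step2, step4, hnn, efin]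
end Kernels

section Kernels2
open Real
variable {r y z x : ℝ}

lemma CDE_ker1 (hr : 2 < r) (hy : 1 ≤ y) (hz : 1 ≤ z) (hx : 1 ≤ x)
    (hxyz : x ≤ y + z) :
    2 * (r * (z * ((max x y) ^ (r-1) * (y * (x ^ r * x)))))
      ≤ (y ^ (1-r) + z ^ (1-r)) *
        ((r * 2 ^ (r+3)) * (y ^ (r+1/2) * (z ^ (r+1/2) * x ^ (r+1/2)))) := by
  have h0y : (0:ℝ) < y := by linarith
  have h0z : (0:ℝ) < z := by linarith
  have h0x : (0:ℝ) < x := by linarith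
  have hM0 : (0:ℝ) ≤ max x y := le_trans h0x.le (le_max_left x y)
  have h0r : (0:ℝ) ≤ r := by linarith
  have h4half : (4:ℝ) ^ ((1:ℝ)/2) = 2 := by
    rw [show (4:ℝ) = 2 ^ (2:ℕ) by norm_num, ← Real.rpow_natCast 2 2,
      ← Real.rpow_mul (by norm_num : (0:ℝ) ≤ 2)]
    norm_num
  have hxsplit : x ^ r * x = x ^ (r+1/2) * x ^ ((1:ℝ)/2) := by
    rw [← Real.rpow_add h0x, ← Real.rpow_add_one h0x.ne' r]
    congr 1; ring
  have h2r3 : (2:ℝ) ^ (r+3) = 2 ^ (r-1) * 16 := by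
    rw [show (16:ℝ) = 2 ^ (4:ℕ) by norm_num, ← Real.rpow_natCast 2 4,
      ← Real.rpow_add (by norm_num : (0:ℝ) < 2)]
    congr 1; ring
  rcases le_total z y with hzy | hyz
  · have hM2 : max x y ≤ 2 * y := max_le (by linarith) (by linarith)
    have hMr : (max x y) ^ (r-1) ≤ 2 ^ (r-1) * y ^ (r-1) := by
      calc (max x y) ^ (r-1) ≤ (2*y) ^ (r-1) := Real.rpow_le_rpow hM0 hM2 (by linarith)
        _ = 2 ^ (r-1) * y ^ (r-1) := Real.mul_rpow (by norm_num) h0y.le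
    have hxh : x ^ ((1:ℝ)/2) ≤ 2 * y ^ ((1:ℝ)/2) := by
      calc x ^ ((1:ℝ)/2) ≤ (4*y) ^ ((1:ℝ)/2) :=
            Real.rpow_le_rpow h0x.le (by linarith) (by norm_num)
        _ = 4 ^ ((1:ℝ)/2) * y ^ ((1:ℝ)/2) := Real.mul_rpow (by norm_num) h0y.le
        _ = 2 * y ^ ((1:ℝ)/2) := by rw [h4half]
    have hyy : y ^ (r-1) * (y * y ^ ((1:ℝ)/2)) = y ^ (r+1/2) := by
      rw [show y * y ^ ((1:ℝ)/2) = y ^ ((1:ℝ)) * y ^ ((1:ℝ)/2) by rw [Real.rpow_one],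
        ← Real.rpow_add h0y, ← Real.rpow_add h0y]
      congr 1; ring
    have step1 : 2 * (r * (z * ((max x y) ^ (r-1) * (y * (x ^ r * x)))))
        = 2 * (r * (z * ((max x y) ^ (r-1) * (y * (x ^ (r+1/2) * x ^ ((1:ℝ)/2)))))) := by
      rw [hxsplit]
    have step2 : 2 * (r * (z * ((max x y) ^ (r-1) * (y * (x ^ (r+1/2) * x ^ ((1:ℝ)/2))))))
        ≤ 2 * (r * (z * ((2 ^ (r-1) * y ^ (r-1)) * (y * (x ^ (r+1/2) * (2 * y ^ ((1:ℝ)/2))))))) := by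
      gcongr <;> first | positivity | linarith
    have step3 : 2 * (r * (z * ((2 ^ (r-1) * y ^ (r-1)) * (y * (x ^ (r+1/2) * (2 * y ^ ((1:ℝ)/2)))))))
        = 2 ^ (r-1) * r * 4 * (z * (y ^ (r+1/2) * x ^ (r+1/2))) := by
      linear_combination (2 ^ (r-1) * r * 4 * z * x ^ (r+1/2)) * hyy
    have step4 : z * (y ^ (r+1/2) * x ^ (r+1/2))
        ≤ (y ^ (1-r) + z ^ (1-r)) * (z ^ (r+1/2) * (y ^ (r+1/2) * x ^ (r+1/2))) :=
      CDE_wa h0y hz (by linarith) (by positivity)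
    have step5 := mul_le_mul_of_nonneg_left step4
      (show (0:ℝ) ≤ 2 ^ (r-1) * r * 4 by
        apply mul_nonneg (mul_nonneg (by positivity) h0r) (by norm_num))
    have hnn : 0 ≤ 2 ^ (r-1) * r *
        ((y ^ (1-r) + z ^ (1-r)) * (z ^ (r+1/2) * (y ^ (r+1/2) * x ^ (r+1/2)))) :=
      mul_nonneg (mul_nonneg (by positivity) h0r) (by positivity)
    have efin : (y ^ (1-r) + z ^ (1-r)) *
          ((r * 2 ^ (r+3)) * (y ^ (r+1/2) * (z ^ (r+1/2) * x ^ (r+1/2))))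
        = 16 * (2 ^ (r-1) * r *
          ((y ^ (1-r) + z ^ (1-r)) * (z ^ (r+1/2) * (y ^ (r+1/2) * x ^ (r+1/2))))) := by
      linear_combination ((y ^ (1-r) + z ^ (1-r)) * r *
        (y ^ (r+1/2) * (z ^ (r+1/2) * x ^ (r+1/2)))) * h2r3
    linarith [step1, step2, step3, step5, hnn, efin]
  · have hM2 : max x y ≤ 2 * z := max_le (by linarith) (by linarith)
    have hMr : (max x y) ^ (r-1) ≤ 2 ^ (r-1) * z ^ (r-1) := by
      calc (max x y) ^ (r-1) ≤ (2*z) ^ (r-1) := Real.rpow_le_rpow hM0 hM2 (by linarith)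
        _ = 2 ^ (r-1) * z ^ (r-1) := Real.mul_rpow (by norm_num) h0z.le
    have hxh : x ^ ((1:ℝ)/2) ≤ 2 * z ^ ((1:ℝ)/2) := by
      calc x ^ ((1:ℝ)/2) ≤ (4*z) ^ ((1:ℝ)/2) :=
            Real.rpow_le_rpow h0x.le (by linarith) (by norm_num)
        _ = 4 ^ ((1:ℝ)/2) * z ^ ((1:ℝ)/2) := Real.mul_rpow (by norm_num) h0z.le
        _ = 2 * z ^ ((1:ℝ)/2) := by rw [h4half]
    have hzz : z ^ (r-1) * (z * z ^ ((1:ℝ)/2)) = z ^ (r+1/2) := by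
      rw [show z * z ^ ((1:ℝ)/2) = z ^ ((1:ℝ)) * z ^ ((1:ℝ)/2) by rw [Real.rpow_one],
        ← Real.rpow_add h0z, ← Real.rpow_add h0z]
      congr 1; ring
    have step1 : 2 * (r * (z * ((max x y) ^ (r-1) * (y * (x ^ r * x)))))
        = 2 * (r * (z * ((max x y) ^ (r-1) * (y * (x ^ (r+1/2) * x ^ ((1:ℝ)/2)))))) := by
      rw [hxsplit]
    have step2 : 2 * (r * (z * ((max x y) ^ (r-1) * (y * (x ^ (r+1/2) * x ^ ((1:ℝ)/2))))))
        ≤ 2 * (r * (z * ((2 ^ (r-1) * z ^ (r-1)) * (y * (x ^ (r+1/2) * (2 * z ^ ((1:ℝ)/2))))))) := by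
      gcongr <;> first | positivity | linarith
    have step3 : 2 * (r * (z * ((2 ^ (r-1) * z ^ (r-1)) * (y * (x ^ (r+1/2) * (2 * z ^ ((1:ℝ)/2)))))))
        = 2 ^ (r-1) * r * 4 * (y * (z ^ (r+1/2) * x ^ (r+1/2))) := by
      linear_combination (2 ^ (r-1) * r * 4 * y * x ^ (r+1/2)) * hzz
    have step4 : y * (z ^ (r+1/2) * x ^ (r+1/2))
        ≤ (y ^ (1-r) + z ^ (1-r)) * (y ^ (r+1/2) * (z ^ (r+1/2) * x ^ (r+1/2))) :=
      CDE_wa' h0z hy (by linarith) (by positivity)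
    have step5 := mul_le_mul_of_nonneg_left step4
      (show (0:ℝ) ≤ 2 ^ (r-1) * r * 4 by
        apply mul_nonneg (mul_nonneg (by positivity) h0r) (by norm_num))
    have hnn : 0 ≤ 2 ^ (r-1) * r *
        ((y ^ (1-r) + z ^ (1-r)) * (y ^ (r+1/2) * (z ^ (r+1/2) * x ^ (r+1/2)))) :=
      mul_nonneg (mul_nonneg (by positivity) h0r) (by positivity)
    have efin : (y ^ (1-r) + z ^ (1-r)) *
          ((r * 2 ^ (r+3)) * (y ^ (r+1/2) * (z ^ (r+1/2) * x ^ (r+1/2))))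
        = 16 * (2 ^ (r-1) * r *
          ((y ^ (1-r) + z ^ (1-r)) * (y ^ (r+1/2) * (z ^ (r+1/2) * x ^ (r+1/2))))) := by
      linear_combination ((y ^ (1-r) + z ^ (1-r)) * r *
        (y ^ (r+1/2) * (z ^ (r+1/2) * x ^ (r+1/2)))) * h2r3
    linarith [step1, step2, step3, step5, hnn, efin]

lemma CDE_ker2 (hr : 2 < r) (hy : 1 ≤ y) (hz : 1 ≤ z) (hx : 1 ≤ x)
    (hyxz : y ≤ x + z) :
    z * ((y ^ r * y) * x ^ r)
      ≤ (y ^ (1-r) + z ^ (1-r)) * (4 * (y ^ (r+1/2) * (z ^ (r+1/2) * x ^ (r+1/2)))) := by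
  have h0y : (0:ℝ) < y := by linarith
  have h0z : (0:ℝ) < z := by linarith
  have h0x : (0:ℝ) < x := by linarith
  have h4half : (4:ℝ) ^ ((1:ℝ)/2) = 2 := by
    rw [show (4:ℝ) = 2 ^ (2:ℕ) by norm_num, ← Real.rpow_natCast 2 2,
      ← Real.rpow_mul (by norm_num : (0:ℝ) ≤ 2)]
    norm_num
  have hysplit : y ^ r * y = y ^ (r+1/2) * y ^ ((1:ℝ)/2) := by
    rw [← Real.rpow_add h0y, ← Real.rpow_add_one h0y.ne' r]
    congr 1; ring
  rcases le_total z x with hzx | hxz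
  · have hyh : y ^ ((1:ℝ)/2) ≤ 2 * x ^ ((1:ℝ)/2) := by
      calc y ^ ((1:ℝ)/2) ≤ (4*x) ^ ((1:ℝ)/2) :=
            Real.rpow_le_rpow h0y.le (by linarith) (by norm_num)
        _ = 4 ^ ((1:ℝ)/2) * x ^ ((1:ℝ)/2) := Real.mul_rpow (by norm_num) h0x.le
        _ = 2 * x ^ ((1:ℝ)/2) := by rw [h4half]
    have hxx : x ^ r * x ^ ((1:ℝ)/2) = x ^ (r+1/2) := by
      rw [← Real.rpow_add h0x]
    have step1 : z * ((y ^ r * y) * x ^ r)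
        = z * ((y ^ (r+1/2) * y ^ ((1:ℝ)/2)) * x ^ r) := by rw [hysplit]
    have step2 : z * ((y ^ (r+1/2) * y ^ ((1:ℝ)/2)) * x ^ r)
        ≤ z * ((y ^ (r+1/2) * (2 * x ^ ((1:ℝ)/2))) * x ^ r) := by
      gcongr <;> positivity
    have step3 : z * ((y ^ (r+1/2) * (2 * x ^ ((1:ℝ)/2))) * x ^ r)
        = 2 * (z * (y ^ (r+1/2) * x ^ (r+1/2))) := by
      linear_combination (2 * z * y ^ (r+1/2)) * hxx
    have step4 : z * (y ^ (r+1/2) * x ^ (r+1/2))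
        ≤ (y ^ (1-r) + z ^ (1-r)) * (z ^ (r+1/2) * (y ^ (r+1/2) * x ^ (r+1/2))) :=
      CDE_wa h0y hz (by linarith) (by positivity)
    have hnn : 0 ≤ (y ^ (1-r) + z ^ (1-r)) *
        (z ^ (r+1/2) * (y ^ (r+1/2) * x ^ (r+1/2))) := by positivity
    linarith [step1, step2, step3, step4, hnn]
  · have hyh : y ^ ((1:ℝ)/2) ≤ 2 * z ^ ((1:ℝ)/2) := by
      calc y ^ ((1:ℝ)/2) ≤ (4*z) ^ ((1:ℝ)/2) :=
            Real.rpow_le_rpow h0y.le (by linarith) (by norm_num)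
        _ = 4 ^ ((1:ℝ)/2) * z ^ ((1:ℝ)/2) := Real.mul_rpow (by norm_num) h0z.le
        _ = 2 * z ^ ((1:ℝ)/2) := by rw [h4half]
    have hz32 : z ^ ((1:ℝ)) * z ^ ((1:ℝ)/2) = z ^ (1-r) * z ^ (r+1/2) := by
      rw [← Real.rpow_add h0z, ← Real.rpow_add h0z]
      congr 1; ring
    rw [Real.rpow_one] at hz32
    have hxup : x ^ r ≤ x ^ (r+1/2) :=
      Real.rpow_le_rpow_of_exponent_le hx (by linarith)
    have step1 : z * ((y ^ r * y) * x ^ r)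
        = z * ((y ^ (r+1/2) * y ^ ((1:ℝ)/2)) * x ^ r) := by rw [hysplit]
    have step2 : z * ((y ^ (r+1/2) * y ^ ((1:ℝ)/2)) * x ^ r)
        ≤ z * ((y ^ (r+1/2) * (2 * z ^ ((1:ℝ)/2))) * x ^ r) := by
      gcongr <;> positivity
    have step3 : z * ((y ^ (r+1/2) * (2 * z ^ ((1:ℝ)/2))) * x ^ r)
        = 2 * ((z ^ (1-r) * z ^ (r+1/2)) * (y ^ (r+1/2) * x ^ r)) := by
      linear_combination (2 * (y ^ (r+1/2) * x ^ r)) * hz32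
    have step4 : 2 * ((z ^ (1-r) * z ^ (r+1/2)) * (y ^ (r+1/2) * x ^ r))
        ≤ 2 * ((z ^ (1-r) * z ^ (r+1/2)) * (y ^ (r+1/2) * x ^ (r+1/2))) := by
      gcongr <;> positivity
    have hu0 : 0 ≤ y ^ (1-r) * (z ^ (r+1/2) * (y ^ (r+1/2) * x ^ (r+1/2))) := by positivity
    linarith [step1, step2, step3, step4, hu0,
      mul_nonneg (Real.rpow_nonneg h0z.le (1-r))
        (mul_nonneg (Real.rpow_nonneg h0z.le (r+1/2))
          (mul_nonneg (Real.rpow_nonneg h0y.le (r+1/2)) (Real.rpow_nonneg h0x.le (r+1/2))))]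
end Kernels2

section Key
open Real

lemma CDE_key {r τ y z x : ℝ} (hr : 2 < r) (hτ : 0 ≤ τ) (hy : 1 ≤ y) (hz : 1 ≤ z) (hx : 1 ≤ x)
    (hxyz : x ≤ y + z) (hyxz : y ≤ x + z) :
    y * ((x ^ r * Real.exp (τ*x)) * |x ^ r * Real.exp (τ*x) - y ^ r * Real.exp (τ*y)|)
      ≤ (y ^ (1-r) + z ^ (1-r)) * ((r * 2 ^ r) * (y ^ r * (z ^ r * x ^ r)))
        + τ * ((y ^ (1-r) + z ^ (1-r)) * ((r * 2 ^ (r+3) + 4) *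
            ((y ^ (r+1/2) * Real.exp (τ*y)) *
              ((z ^ (r+1/2) * Real.exp (τ*z)) * (x ^ (r+1/2) * Real.exp (τ*x)))))) := by
  have h0y : (0:ℝ) < y := by linarith
  have h0z : (0:ℝ) < z := by linarith
  have h0x : (0:ℝ) < x := by linarith
  have h0r : (0:ℝ) ≤ r := by linarith
  have hM0 : (0:ℝ) ≤ max x y := le_trans h0x.le (le_max_left x y)
  have hMyz : max x y ≤ y + z := max_le hxyz (by linarith)
  -- step A : |x^r - y^r| ≤ r * M^(r-1) * z
  have hA : |x ^ r - y ^ r| ≤ r * (max x y) ^ (r-1) * z := by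
    have hMn : 0 ≤ r * (max x y) ^ (r-1) := mul_nonneg h0r (Real.rpow_nonneg hM0 _)
    rcases le_total y x with h | h
    · rw [abs_of_nonneg (sub_nonneg.mpr (Real.rpow_le_rpow h0y.le h (by linarith)))]
      have hup : x ^ (r-1) ≤ (max x y) ^ (r-1) :=
        Real.rpow_le_rpow h0x.le (le_max_left x y) (by linarith)
      calc x ^ r - y ^ r ≤ r * x ^ (r-1) * (x - y) := CDE_mvt (by linarith) h0y.le h
        _ ≤ r * (max x y) ^ (r-1) * (x - y) :=
            mul_le_mul_of_nonneg_right (mul_le_mul_of_nonneg_left hup h0r) (by linarith)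
        _ ≤ r * (max x y) ^ (r-1) * z := mul_le_mul_of_nonneg_left (by linarith) hMn
    · rw [abs_of_nonpos (sub_nonpos.mpr (Real.rpow_le_rpow h0x.le h (by linarith)))]
      calc -(x ^ r - y ^ r) = y ^ r - x ^ r := by ring
        _ ≤ r * y ^ (r-1) * (y - x) := CDE_mvt (by linarith) h0x.le h
        _ ≤ r * (max x y) ^ (r-1) * (y - x) :=
            mul_le_mul_of_nonneg_right (mul_le_mul_of_nonneg_left
              (Real.rpow_le_rpow h0y.le (le_max_right x y) (by linarith)) h0r) (by linarith)
        _ ≤ r * (max x y) ^ (r-1) * z := mul_le_mul_of_nonneg_left (by linarith) hMn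
  -- step B : |exp(τx) - exp(τy)| ≤ τ * z * exp(τ * max x y)
  have hB : |Real.exp (τ*x) - Real.exp (τ*y)| ≤ τ * z * Real.exp (τ * max x y) := by
    have hEn : 0 ≤ τ * z := mul_nonneg hτ h0z.le
    rcases le_total y x with h | h
    · rw [abs_of_nonneg (sub_nonneg.mpr (Real.exp_le_exp.mpr (by nlinarith)))]
      calc Real.exp (τ*x) - Real.exp (τ*y) ≤ τ * (x - y) * Real.exp (τ*x) :=
            CDE_exp_mvt hτ h
        _ ≤ τ * z * Real.exp (τ * max x y) := by
            apply mul_le_mul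
            · nlinarith
            · exact Real.exp_le_exp.mpr (by nlinarith [le_max_left x y])
            · exact (Real.exp_pos _).le
            · exact hEn
    · rw [abs_of_nonpos (sub_nonpos.mpr (Real.exp_le_exp.mpr (by nlinarith)))]
      calc -(Real.exp (τ*x) - Real.exp (τ*y)) = Real.exp (τ*y) - Real.exp (τ*x) := by ring
        _ ≤ τ * (y - x) * Real.exp (τ*y) := CDE_exp_mvt hτ h
        _ ≤ τ * z * Real.exp (τ * max x y) := by
            apply mul_le_mul
            · nlinarith
            · exact Real.exp_le_exp.mpr (by nlinarith [le_max_right x y])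
            · exact (Real.exp_pos _).le
            · exact hEn
  -- step C : decompose the difference
  have hD : |x ^ r * Real.exp (τ*x) - y ^ r * Real.exp (τ*y)|
      ≤ (r * (max x y) ^ (r-1) * z) * Real.exp (τ*x) + y ^ r * (τ * z * Real.exp (τ * max x y)) := by
    have hid : x ^ r * Real.exp (τ*x) - y ^ r * Real.exp (τ*y)
        = (x ^ r - y ^ r) * Real.exp (τ*x) + y ^ r * (Real.exp (τ*x) - Real.exp (τ*y)) := by ring
    rw [hid]
    calc |(x ^ r - y ^ r) * Real.exp (τ*x) + y ^ r * (Real.exp (τ*x) - Real.exp (τ*y))|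
        ≤ |(x ^ r - y ^ r) * Real.exp (τ*x)| + |y ^ r * (Real.exp (τ*x) - Real.exp (τ*y))| :=
          abs_add_le _ _
      _ = |x ^ r - y ^ r| * Real.exp (τ*x) + y ^ r * |Real.exp (τ*x) - Real.exp (τ*y)| := by
          rw [abs_mul, abs_mul, abs_of_nonneg (Real.exp_pos _).le,
            abs_of_nonneg (Real.rpow_nonneg h0y.le r)]
      _ ≤ (r * (max x y) ^ (r-1) * z) * Real.exp (τ*x)
            + y ^ r * (τ * z * Real.exp (τ * max x y)) := by
          apply add_le_add (mul_le_mul_of_nonneg_right hA (Real.exp_pos _).le)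
            (mul_le_mul_of_nonneg_left hB (Real.rpow_nonneg h0y.le r))
  -- exponential bounds
  have hE1 : Real.exp (τ*x) * Real.exp (τ*x)
      ≤ 1 + (2*(τ*x)) * (Real.exp (τ*x) * (Real.exp (τ*y) * Real.exp (τ*z))) := by
    have et : Real.exp (τ*x) * Real.exp (τ*x) = Real.exp (τ*x + τ*x) := (Real.exp_add _ _).symm
    have h1 : Real.exp (τ*x + τ*x) ≤ 1 + (τ*x + τ*x) * Real.exp (τ*x + τ*x) := CDE_exp_self
    have h2 : Real.exp (τ*x + τ*x) ≤ Real.exp (τ*x) * (Real.exp (τ*y) * Real.exp (τ*z)) := by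
      rw [← Real.exp_add, ← Real.exp_add]
      apply Real.exp_le_exp.mpr
      nlinarith [mul_le_mul_of_nonneg_left hxyz hτ]
    have h3 : 0 ≤ τ*x + τ*x := by positivity
    nlinarith [mul_le_mul_of_nonneg_left h2 h3]
  have hE2 : Real.exp (τ*x) * Real.exp (τ * max x y)
      ≤ Real.exp (τ*x) * (Real.exp (τ*y) * Real.exp (τ*z)) := by
    apply mul_le_mul_of_nonneg_left _ (Real.exp_pos _).le
    rw [← Real.exp_add]
    apply Real.exp_le_exp.mpr
    nlinarith [mul_le_mul_of_nonneg_left hMyz hτ]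
  -- assemble
  have main1 : y * ((x ^ r * Real.exp (τ*x)) * |x ^ r * Real.exp (τ*x) - y ^ r * Real.exp (τ*y)|)
      ≤ r * (z * ((max x y) ^ (r-1) * (y * x ^ r))) * (Real.exp (τ*x) * Real.exp (τ*x))
        + τ * ((z * ((y ^ r * y) * x ^ r)) * (Real.exp (τ*x) * Real.exp (τ * max x y))) := by
    have h := mul_le_mul_of_nonneg_left hD
      (show 0 ≤ y * (x ^ r * Real.exp (τ*x)) by positivity)
    calc y * ((x ^ r * Real.exp (τ*x)) * |x ^ r * Real.exp (τ*x) - y ^ r * Real.exp (τ*y)|)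
        = y * (x ^ r * Real.exp (τ*x)) * |x ^ r * Real.exp (τ*x) - y ^ r * Real.exp (τ*y)| := by
          ring
      _ ≤ y * (x ^ r * Real.exp (τ*x)) * ((r * (max x y) ^ (r-1) * z) * Real.exp (τ*x)
            + y ^ r * (τ * z * Real.exp (τ * max x y))) := h
      _ = r * (z * ((max x y) ^ (r-1) * (y * x ^ r))) * (Real.exp (τ*x) * Real.exp (τ*x))
            + τ * ((z * ((y ^ r * y) * x ^ r)) * (Real.exp (τ*x) * Real.exp (τ * max x y))) := by
          ring
  have hT0 : 0 ≤ r * (z * ((max x y) ^ (r-1) * (y * x ^ r))) := by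
    apply mul_nonneg h0r; positivity
  have main2 : r * (z * ((max x y) ^ (r-1) * (y * x ^ r))) * (Real.exp (τ*x) * Real.exp (τ*x))
      ≤ r * (z * ((max x y) ^ (r-1) * (y * x ^ r)))
        + τ * ((2 * (r * (z * ((max x y) ^ (r-1) * (y * (x ^ r * x)))))) *
            (Real.exp (τ*x) * (Real.exp (τ*y) * Real.exp (τ*z)))) := by
    have h := mul_le_mul_of_nonneg_left hE1 hT0
    calc r * (z * ((max x y) ^ (r-1) * (y * x ^ r))) * (Real.exp (τ*x) * Real.exp (τ*x))
        ≤ r * (z * ((max x y) ^ (r-1) * (y * x ^ r))) *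
            (1 + (2*(τ*x)) * (Real.exp (τ*x) * (Real.exp (τ*y) * Real.exp (τ*z)))) := h
      _ = r * (z * ((max x y) ^ (r-1) * (y * x ^ r)))
            + τ * ((2 * (r * (z * ((max x y) ^ (r-1) * (y * (x ^ r * x)))))) *
              (Real.exp (τ*x) * (Real.exp (τ*y) * Real.exp (τ*z)))) := by ring
  have main3 : τ * ((z * ((y ^ r * y) * x ^ r)) * (Real.exp (τ*x) * Real.exp (τ * max x y)))
      ≤ τ * ((z * ((y ^ r * y) * x ^ r)) * (Real.exp (τ*x) * (Real.exp (τ*y) * Real.exp (τ*z)))) := by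
    apply mul_le_mul_of_nonneg_left _ hτ
    apply mul_le_mul_of_nonneg_left hE2 (by positivity)
  -- apply kernels
  have k0 := CDE_ker0 hr hy hz hx hxyz
  have k1 := CDE_ker1 hr hy hz hx hxyz
  have k2 := CDE_ker2 hr hy hz hx hyxz
  have hEnn : (0:ℝ) ≤ Real.exp (τ*x) * (Real.exp (τ*y) * Real.exp (τ*z)) := by positivity
  have k1' := mul_le_mul_of_nonneg_right k1 hEnn
  have k2' := mul_le_mul_of_nonneg_right k2 hEnn
  have hfin : τ * ((2 * (r * (z * ((max x y) ^ (r-1) * (y * (x ^ r * x)))))) *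
        (Real.exp (τ*x) * (Real.exp (τ*y) * Real.exp (τ*z))))
      + τ * ((z * ((y ^ r * y) * x ^ r)) * (Real.exp (τ*x) * (Real.exp (τ*y) * Real.exp (τ*z))))
      ≤ τ * ((y ^ (1-r) + z ^ (1-r)) * ((r * 2 ^ (r+3) + 4) *
          ((y ^ (r+1/2) * Real.exp (τ*y)) *
            ((z ^ (r+1/2) * Real.exp (τ*z)) * (x ^ (r+1/2) * Real.exp (τ*x)))))) := by
    have hsum := add_le_add k1' k2'
    have := mul_le_mul_of_nonneg_left hsum hτ
    linarith [this]
  linarith [main1, main2, main3, k0, hfin]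
end Key

section ENNPart
open scoped ENNReal
open MeasureTheory

noncomputable def Kw (r : ℝ) (m : ℤ × ℤ) : ℝ≥0∞ := ENNReal.ofReal (nz m ^ (1-r))
noncomputable def Ff0 (r : ℝ) (f : ℤ × ℤ → ℝ≥0∞) (m : ℤ × ℤ) : ℝ≥0∞ :=
  ENNReal.ofReal (nz m ^ r) * f m
noncomputable def Ff1 (r τ : ℝ) (f : ℤ × ℤ → ℝ≥0∞) (m : ℤ × ℤ) : ℝ≥0∞ :=
  ENNReal.ofReal (nz m ^ (r+1/2) * Real.exp (τ * nz m)) * f m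

lemma CDE_sqr_rpow {t : ℝ} (ht : 0 ≤ t) (s : ℝ) : (t ^ s) ^ (2:ℕ) = t ^ (2*s) := by
  rw [← Real.rpow_natCast (t ^ s) 2, ← Real.rpow_mul ht]
  congr 1; push_cast; ring

lemma CDE_norm0 (r : ℝ) (f : ℤ × ℤ → ℝ≥0∞) :
    (∑' m, (Ff0 r f m) ^ 2) ^ ((1:ℝ)/2) = S r 0 f := by
  unfold S
  congr 1
  refine tsum_congr fun m => ?_
  unfold Ff0
  rw [mul_pow, ← ENNReal.ofReal_pow (Real.rpow_nonneg (nz_nonneg m) _),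
    CDE_sqr_rpow (nz_nonneg m)]
  congr 2
  rw [show (2:ℝ)*0*nz m = 0 by ring, Real.exp_zero, mul_one]

lemma CDE_norm1 (r τ : ℝ) (f : ℤ × ℤ → ℝ≥0∞) :
    (∑' m, (Ff1 r τ f m) ^ 2) ^ ((1:ℝ)/2) = S (r+1/2) τ f := by
  unfold S
  congr 1
  refine tsum_congr fun m => ?_
  unfold Ff1
  rw [mul_pow, ← ENNReal.ofReal_pow
    (mul_nonneg (Real.rpow_nonneg (nz_nonneg m) _) (Real.exp_pos _).le)]
  congr 2
  rw [mul_pow, CDE_sqr_rpow (nz_nonneg m), sq, ← Real.exp_add,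
    show τ*nz m + τ*nz m = 2*τ*nz m by ring]

lemma CDE_wnorm {r : ℝ} (hr : 2 < r) :
    (∑' m, (Kw r m) ^ 2) ^ ((1:ℝ)/2)
      = ENNReal.ofReal ((∑' m : ℤ × ℤ, nz m ^ (2-2*r)) ^ ((1:ℝ)/2)) := by
  have hσs : Summable (fun m : ℤ × ℤ => nz m ^ (2 - 2*r)) := by
    have h := summable_nz_rpow (s := 2*r - 2) (by linarith)
    exact h.congr fun m => by rw [show -(2*r-2) = 2-2*r by ring]
  have hσ0 : 0 ≤ ∑' m : ℤ × ℤ, nz m ^ (2-2*r) :=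
    tsum_nonneg fun m => Real.rpow_nonneg (nz_nonneg m) _
  have h1 : ∑' m, (Kw r m) ^ 2 = ENNReal.ofReal (∑' m : ℤ × ℤ, nz m ^ (2-2*r)) := by
    rw [ENNReal.ofReal_tsum_of_nonneg (fun m => Real.rpow_nonneg (nz_nonneg m) _) hσs]
    refine tsum_congr fun m => ?_
    unfold Kw
    rw [← ENNReal.ofReal_pow (Real.rpow_nonneg (nz_nonneg m) _),
      CDE_sqr_rpow (nz_nonneg m), show (2:ℝ)*(1-r) = 2-2*r by ring]
  rw [h1, ENNReal.ofReal_rpow_of_nonneg hσ0 (by norm_num)]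

lemma CDE_summaster (w F G H : ℤ × ℤ → ℝ≥0∞) :
    (∑' p : (ℤ × ℤ) × (ℤ × ℤ), (w p.1 + w p.2) * (F p.1 * G p.2 * H (p.1 + p.2)))
      ≤ 2 * ((∑' m, w m ^ 2) ^ ((1:ℝ)/2) * ((∑' m, F m ^ 2) ^ ((1:ℝ)/2) *
          ((∑' m, G m ^ 2) ^ ((1:ℝ)/2) * (∑' m, H m ^ 2) ^ ((1:ℝ)/2)))) := by
  calc (∑' p : (ℤ × ℤ) × (ℤ × ℤ), (w p.1 + w p.2) * (F p.1 * G p.2 * H (p.1 + p.2)))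
      = (∑' p : (ℤ × ℤ) × (ℤ × ℤ), (w p.1 * (F p.1 * G p.2 * H (p.1 + p.2))
          + w p.2 * (F p.1 * G p.2 * H (p.1 + p.2)))) := tsum_congr fun p => by ring
    _ = (∑' p : (ℤ × ℤ) × (ℤ × ℤ), w p.1 * (F p.1 * G p.2 * H (p.1 + p.2)))
          + (∑' p : (ℤ × ℤ) × (ℤ × ℤ), w p.2 * (F p.1 * G p.2 * H (p.1 + p.2))) :=
        ENNReal.tsum_add
    _ ≤ ((∑' m, w m ^ 2) ^ ((1:ℝ)/2) * ((∑' m, F m ^ 2) ^ ((1:ℝ)/2) *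
          ((∑' m, G m ^ 2) ^ ((1:ℝ)/2) * (∑' m, H m ^ 2) ^ ((1:ℝ)/2))))
        + ((∑' m, w m ^ 2) ^ ((1:ℝ)/2) * ((∑' m, F m ^ 2) ^ ((1:ℝ)/2) *
          ((∑' m, G m ^ 2) ^ ((1:ℝ)/2) * (∑' m, H m ^ 2) ^ ((1:ℝ)/2)))) :=
        add_le_add (master1 w F G H) (master2 w F G H)
    _ = _ := (two_mul _).symm

lemma CDE_pt {r τ : ℝ} (hr : 2 < r) (hτ : 0 ≤ τ) (a b c : ℤ × ℤ → ℝ≥0∞)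
    (p : (ℤ × ℤ) × (ℤ × ℤ)) :
    ENNReal.ofReal (nz p.1) * a p.1 * b p.2
        * ENNReal.ofReal (nz (p.1 + p.2) ^ r * Real.exp (τ * nz (p.1 + p.2)))
        * c (p.1 + p.2)
        * ENNReal.ofReal |nz (p.1 + p.2) ^ r * Real.exp (τ * nz (p.1 + p.2))
            - nz p.1 ^ r * Real.exp (τ * nz p.1)|
      ≤ ENNReal.ofReal (r*2^r) *
          ((Kw r p.1 + Kw r p.2) * (Ff0 r a p.1 * Ff0 r b p.2 * Ff0 r c (p.1 + p.2)))
        + ENNReal.ofReal τ * (ENNReal.ofReal (r*2^(r+3)+4) *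
          ((Kw r p.1 + Kw r p.2) * (Ff1 r τ a p.1 * Ff1 r τ b p.2 * Ff1 r τ c (p.1 + p.2)))) := by
  have hnzr : ∀ (m : ℤ × ℤ) (e : ℝ), 0 ≤ nz m ^ e := fun m e => Real.rpow_nonneg (nz_nonneg m) e
  have hr0 : (0:ℝ) ≤ r := by linarith
  have hCa : (0:ℝ) ≤ r * 2 ^ r := mul_nonneg hr0 (Real.rpow_nonneg (by norm_num) _)
  have hCb : (0:ℝ) ≤ r * 2 ^ (r+3) + 4 := by
    have := mul_nonneg hr0 (Real.rpow_nonneg (by norm_num : (0:ℝ) ≤ 2) (r+3)); linarith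
  by_cases hj : p.1 = 0
  · rw [hj]; simp [nz_zero]
  by_cases hk : p.2 = 0
  · rw [hk]; simp
  by_cases hm : p.1 + p.2 = 0
  · rw [hm]; simp [nz_zero, Real.zero_rpow (show r ≠ 0 by linarith)]
  -- nondegenerate
  have hy := one_le_nz hj
  have hz := one_le_nz hk
  have hx := one_le_nz hm
  have key := CDE_key hr hτ hy hz hx (nz_add_le p.1 p.2) (nz_sub_le p.1 p.2)
  have hK0 : (0:ℝ) ≤ nz p.1 ^ (1-r) + nz p.2 ^ (1-r) := add_nonneg (hnzr _ _) (hnzr _ _)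
  have hq : ∀ (m : ℤ × ℤ) (e : ℝ), 0 ≤ nz m ^ e * Real.exp (τ * nz m) :=
    fun m e => mul_nonneg (hnzr m e) (Real.exp_pos _).le
  -- rewrite LHS
  have lhs_eq : ENNReal.ofReal (nz p.1) * a p.1 * b p.2
        * ENNReal.ofReal (nz (p.1 + p.2) ^ r * Real.exp (τ * nz (p.1 + p.2)))
        * c (p.1 + p.2)
        * ENNReal.ofReal |nz (p.1 + p.2) ^ r * Real.exp (τ * nz (p.1 + p.2))
            - nz p.1 ^ r * Real.exp (τ * nz p.1)|
      = ENNReal.ofReal (nz p.1 * ((nz (p.1 + p.2) ^ r * Real.exp (τ * nz (p.1 + p.2))) *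
          |nz (p.1 + p.2) ^ r * Real.exp (τ * nz (p.1 + p.2))
            - nz p.1 ^ r * Real.exp (τ * nz p.1)|))
        * (a p.1 * (b p.2 * c (p.1 + p.2))) := by
    rw [ENNReal.ofReal_mul (nz_nonneg p.1), ENNReal.ofReal_mul (hq _ r)]
    ring
  rw [lhs_eq]
  -- rewrite RHS
  have rhs_eq : ENNReal.ofReal (r*2^r) *
          ((Kw r p.1 + Kw r p.2) * (Ff0 r a p.1 * Ff0 r b p.2 * Ff0 r c (p.1 + p.2)))
        + ENNReal.ofReal τ * (ENNReal.ofReal (r*2^(r+3)+4) *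
          ((Kw r p.1 + Kw r p.2) * (Ff1 r τ a p.1 * Ff1 r τ b p.2 * Ff1 r τ c (p.1 + p.2))))
      = ENNReal.ofReal ((nz p.1 ^ (1-r) + nz p.2 ^ (1-r)) * ((r * 2 ^ r) *
            (nz p.1 ^ r * (nz p.2 ^ r * nz (p.1 + p.2) ^ r))))
          * (a p.1 * (b p.2 * c (p.1 + p.2)))
        + ENNReal.ofReal τ *
          (ENNReal.ofReal ((nz p.1 ^ (1-r) + nz p.2 ^ (1-r)) * ((r * 2 ^ (r+3) + 4) *
            ((nz p.1 ^ (r+1/2) * Real.exp (τ * nz p.1)) *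
              ((nz p.2 ^ (r+1/2) * Real.exp (τ * nz p.2)) *
                (nz (p.1 + p.2) ^ (r+1/2) * Real.exp (τ * nz (p.1 + p.2)))))))
          * (a p.1 * (b p.2 * c (p.1 + p.2)))) := by
    unfold Kw Ff0 Ff1
    rw [ENNReal.ofReal_mul hK0, ENNReal.ofReal_mul hCa,
      ENNReal.ofReal_mul (hnzr p.1 r), ENNReal.ofReal_mul (hnzr p.2 r),
      ENNReal.ofReal_mul hK0, ENNReal.ofReal_mul hCb,
      ENNReal.ofReal_mul (hq p.1 (r+1/2)), ENNReal.ofReal_mul (hq p.2 (r+1/2)),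
      ENNReal.ofReal_add (hnzr p.1 (1-r)) (hnzr p.2 (1-r))]
    ring
  rw [rhs_eq]
  -- conclude from the real inequality
  have hP2nn : 0 ≤ (nz p.1 ^ (1-r) + nz p.2 ^ (1-r)) * ((r * 2 ^ (r+3) + 4) *
      ((nz p.1 ^ (r+1/2) * Real.exp (τ * nz p.1)) *
        ((nz p.2 ^ (r+1/2) * Real.exp (τ * nz p.2)) *
          (nz (p.1 + p.2) ^ (r+1/2) * Real.exp (τ * nz (p.1 + p.2)))))) :=
    mul_nonneg hK0 (mul_nonneg hCb (mul_nonneg (hq _ _) (mul_nonneg (hq _ _) (hq _ _))))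
  have hP1nn : 0 ≤ (nz p.1 ^ (1-r) + nz p.2 ^ (1-r)) * ((r * 2 ^ r) *
      (nz p.1 ^ r * (nz p.2 ^ r * nz (p.1 + p.2) ^ r))) :=
    mul_nonneg hK0 (mul_nonneg hCa (mul_nonneg (hnzr _ _) (mul_nonneg (hnzr _ _) (hnzr _ _))))
  calc ENNReal.ofReal (nz p.1 * ((nz (p.1 + p.2) ^ r * Real.exp (τ * nz (p.1 + p.2))) *
          |nz (p.1 + p.2) ^ r * Real.exp (τ * nz (p.1 + p.2))
            - nz p.1 ^ r * Real.exp (τ * nz p.1)|))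
        * (a p.1 * (b p.2 * c (p.1 + p.2)))
      ≤ (ENNReal.ofReal ((nz p.1 ^ (1-r) + nz p.2 ^ (1-r)) * ((r * 2 ^ r) *
            (nz p.1 ^ r * (nz p.2 ^ r * nz (p.1 + p.2) ^ r))))
          + ENNReal.ofReal (τ * ((nz p.1 ^ (1-r) + nz p.2 ^ (1-r)) * ((r * 2 ^ (r+3) + 4) *
            ((nz p.1 ^ (r+1/2) * Real.exp (τ * nz p.1)) *
              ((nz p.2 ^ (r+1/2) * Real.exp (τ * nz p.2)) *
                (nz (p.1 + p.2) ^ (r+1/2) * Real.exp (τ * nz (p.1 + p.2)))))))))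
          * (a p.1 * (b p.2 * c (p.1 + p.2))) := by
        apply mul_le_mul_left
        rw [← ENNReal.ofReal_add hP1nn (mul_nonneg hτ hP2nn)]
        exact ENNReal.ofReal_le_ofReal key
    _ = _ := by
        rw [ENNReal.ofReal_mul hτ]
        ring
end ENNPart


/-- Fourier-coefficient form of the commutator estimate
`|⟨A^r e^{τA}((∇·f)g), A^r e^{τA}h⟩ − ⟨(∇·A^r e^{τA}f)g, A^r e^{τA}h⟩|` of Lemma A.5. -/
theorem commutator_divergence_estimate :
    ∀ r : ℝ, 2 < r → ∃ C : ℝ, 0 < C ∧ ∀ τ : ℝ, 0 ≤ τ → ∀ a b c : ℤ × ℤ → ℝ≥0∞,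
      (∑' p : (ℤ × ℤ) × (ℤ × ℤ),
          ENNReal.ofReal (nz p.1) * a p.1 * b p.2
            * ENNReal.ofReal (nz (p.1 + p.2) ^ r * Real.exp (τ * nz (p.1 + p.2)))
            * c (p.1 + p.2)
            * ENNReal.ofReal |nz (p.1 + p.2) ^ r * Real.exp (τ * nz (p.1 + p.2))
                - nz p.1 ^ r * Real.exp (τ * nz p.1)|)
        ≤ ENNReal.ofReal C *
            (S r 0 a * S r 0 b * S r 0 c
              + ENNReal.ofReal τ * S (r + 1 / 2) τ a * S (r + 1 / 2) τ b
                  * S (r + 1 / 2) τ c) := by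
  intro r hr
  have hr0 : (0:ℝ) ≤ r := by linarith
  set s : ℝ := (∑' m : ℤ × ℤ, nz m ^ (2-2*r)) ^ ((1:ℝ)/2) with hsdef
  have hs0 : 0 ≤ s :=
    Real.rpow_nonneg (tsum_nonneg fun m => Real.rpow_nonneg (nz_nonneg m) _) _
  have hCa : (0:ℝ) ≤ r * 2 ^ r := mul_nonneg hr0 (Real.rpow_nonneg (by norm_num) _)
  have hCb : (0:ℝ) ≤ r * 2 ^ (r+3) + 4 := by
    have := mul_nonneg hr0 (Real.rpow_nonneg (by norm_num : (0:ℝ) ≤ 2) (r+3)); linarith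
  refine ⟨2*s*(r*2^r) + 2*s*(r*2^(r+3)+4) + 1, by nlinarith, ?_⟩
  intro τ hτ a b c
  have hX0 : (∑' p : (ℤ × ℤ) × (ℤ × ℤ),
        (Kw r p.1 + Kw r p.2) * (Ff0 r a p.1 * Ff0 r b p.2 * Ff0 r c (p.1 + p.2)))
      ≤ 2 * (ENNReal.ofReal s * (S r 0 a * (S r 0 b * S r 0 c))) := by
    have h := CDE_summaster (Kw r) (Ff0 r a) (Ff0 r b) (Ff0 r c)
    rwa [CDE_wnorm hr, CDE_norm0, CDE_norm0, CDE_norm0] at h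
  have hX1 : (∑' p : (ℤ × ℤ) × (ℤ × ℤ),
        (Kw r p.1 + Kw r p.2) * (Ff1 r τ a p.1 * Ff1 r τ b p.2 * Ff1 r τ c (p.1 + p.2)))
      ≤ 2 * (ENNReal.ofReal s * (S (r+1/2) τ a * (S (r+1/2) τ b * S (r+1/2) τ c))) := by
    have h := CDE_summaster (Kw r) (Ff1 r τ a) (Ff1 r τ b) (Ff1 r τ c)
    rwa [CDE_wnorm hr, CDE_norm1, CDE_norm1, CDE_norm1] at h
  have hconst : ∀ Cc : ℝ, 0 ≤ Cc → Cc * (2*s) ≤ 2*s*(r*2^r) + 2*s*(r*2^(r+3)+4) + 1 →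
      ∀ Y : ℝ≥0∞, ENNReal.ofReal Cc * (2 * (ENNReal.ofReal s * Y))
        ≤ ENNReal.ofReal (2*s*(r*2^r) + 2*s*(r*2^(r+3)+4) + 1) * Y := by
    intro Cc hCc hle Y
    have e1 : ENNReal.ofReal Cc * (2 * (ENNReal.ofReal s * Y))
        = ENNReal.ofReal (Cc * (2 * s)) * Y := by
      rw [ENNReal.ofReal_mul hCc, ENNReal.ofReal_mul (by norm_num : (0:ℝ) ≤ 2),
        ENNReal.ofReal_ofNat]
      ring
    rw [e1]
    exact mul_le_mul_left (ENNReal.ofReal_le_ofReal (by linarith)) Y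
  calc (∑' p : (ℤ × ℤ) × (ℤ × ℤ),
          ENNReal.ofReal (nz p.1) * a p.1 * b p.2
            * ENNReal.ofReal (nz (p.1 + p.2) ^ r * Real.exp (τ * nz (p.1 + p.2)))
            * c (p.1 + p.2)
            * ENNReal.ofReal |nz (p.1 + p.2) ^ r * Real.exp (τ * nz (p.1 + p.2))
                - nz p.1 ^ r * Real.exp (τ * nz p.1)|)
      ≤ (∑' p : (ℤ × ℤ) × (ℤ × ℤ),
          (ENNReal.ofReal (r*2^r) *
            ((Kw r p.1 + Kw r p.2) * (Ff0 r a p.1 * Ff0 r b p.2 * Ff0 r c (p.1 + p.2)))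
          + ENNReal.ofReal τ * (ENNReal.ofReal (r*2^(r+3)+4) *
            ((Kw r p.1 + Kw r p.2) * (Ff1 r τ a p.1 * Ff1 r τ b p.2 * Ff1 r τ c (p.1 + p.2)))))) :=
        ENNReal.tsum_le_tsum (CDE_pt hr hτ a b c)
    _ = ENNReal.ofReal (r*2^r) * (∑' p : (ℤ × ℤ) × (ℤ × ℤ),
            (Kw r p.1 + Kw r p.2) * (Ff0 r a p.1 * Ff0 r b p.2 * Ff0 r c (p.1 + p.2)))
          + ENNReal.ofReal τ * (ENNReal.ofReal (r*2^(r+3)+4) * (∑' p : (ℤ × ℤ) × (ℤ × ℤ),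
            (Kw r p.1 + Kw r p.2) * (Ff1 r τ a p.1 * Ff1 r τ b p.2 * Ff1 r τ c (p.1 + p.2)))) := by
        rw [ENNReal.tsum_add, ENNReal.tsum_mul_left, ENNReal.tsum_mul_left,
          ENNReal.tsum_mul_left]
    _ ≤ ENNReal.ofReal (r*2^r) * (2 * (ENNReal.ofReal s * (S r 0 a * (S r 0 b * S r 0 c))))
          + ENNReal.ofReal τ * (ENNReal.ofReal (r*2^(r+3)+4) *
            (2 * (ENNReal.ofReal s * (S (r+1/2) τ a * (S (r+1/2) τ b * S (r+1/2) τ c))))) := by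
        gcongr
    _ ≤ ENNReal.ofReal (2*s*(r*2^r) + 2*s*(r*2^(r+3)+4) + 1) * (S r 0 a * (S r 0 b * S r 0 c))
          + ENNReal.ofReal τ * (ENNReal.ofReal (2*s*(r*2^r) + 2*s*(r*2^(r+3)+4) + 1) *
            (S (r+1/2) τ a * (S (r+1/2) τ b * S (r+1/2) τ c))) := by
        apply add_le_add
        · exact hconst _ hCa (by nlinarith) _
        · exact mul_le_mul_right (hconst _ hCb (by nlinarith) _) _
    _ = ENNReal.ofReal (2*s*(r*2^r) + 2*s*(r*2^(r+3)+4) + 1) *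
          (S r 0 a * S r 0 b * S r 0 c
            + ENNReal.ofReal τ * S (r + 1/2) τ a * S (r + 1/2) τ b * S (r + 1/2) τ c) := by
        ring

end
end

section
/- Let C > 0 and M ≥ 0, and let u : [0,∞) → [0,∞) be differentiable with u(0) ≤ M and u'(t) ≤ C · u(t) · (1 + ln⁺(u(t))) for all t ≥ 0, where ln⁺(x) := max(ln x, 0). Then for all t ≥ 0, u(t) ≤ (M + e)^{exp(2Ct)}. (This is the double-exponential growth bound for the Sobolev norm of solutions of the 2D Euler equations derived from the logarithmic differential inequality.) -/
/-- Double-exponential growth bound for solutions of the logarithmic differential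
inequality `u' ≤ C u (1 + ln⁺ u)` on `[0,∞)`: if `u(0) ≤ M` then
`u(t) ≤ (M + e)^{exp(2Ct)}` for all `t ≥ 0`. -/
theorem log_diff_ineq_double_exponential_bound
    (C M : ℝ) (hC : 0 < C) (hM : 0 ≤ M)
    (u u' : ℝ → ℝ)
    (hu_nonneg : ∀ t : ℝ, 0 ≤ t → 0 ≤ u t)
    (hu0 : u 0 ≤ M)
    (hderiv : ∀ t : ℝ, 0 ≤ t → HasDerivWithinAt u (u' t) (Set.Ici 0) t)
    (hineq : ∀ t : ℝ, 0 ≤ t → u' t ≤ C * u t * (1 + max (Real.log (u t)) 0)) :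
    ∀ t : ℝ, 0 ≤ t → u t ≤ (M + Real.exp 1) ^ Real.exp (2 * C * t) := by
  set L : ℝ := Real.log (M + Real.exp 1) with hL
  have hMe : (0:ℝ) < M + Real.exp 1 := by positivity
  have hL1 : 1 ≤ L := by
    rw [hL]
    exact (Real.le_log_iff_exp_le hMe).2 (by linarith [Real.exp_pos 1])
  set B : ℝ → ℝ := fun t => Real.exp (Real.exp (2 * C * t) * L) with hBdef
  set B' : ℝ → ℝ := fun t => (2 * C * Real.exp (2 * C * t) * L) *
      Real.exp (Real.exp (2 * C * t) * L) with hB'def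
  have hBderiv : ∀ x : ℝ, HasDerivAt B (B' x) x := by
    intro x
    have h1 : HasDerivAt (fun t : ℝ => 2 * C * t) (2 * C) x := by
      simpa using (hasDerivAt_id x).const_mul (2 * C)
    have h2 : HasDerivAt (fun t : ℝ => Real.exp (2 * C * t) * L)
        (Real.exp (2 * C * x) * (2 * C) * L) x := (h1.exp).mul_const L
    have := (h2.exp)
    convert this using 1
    simp [hB'def]; ring
  have hrpow : ∀ t : ℝ, (M + Real.exp 1) ^ Real.exp (2 * C * t) = B t := by
    intro t
    rw [Real.rpow_def_of_pos hMe, hBdef]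
    ring_nf
    exact congrArg Real.exp (mul_comm _ _)
  intro t ht
  rw [hrpow t]
  have hcont : ContinuousOn u (Set.Icc 0 t) := by
    intro x hx
    exact ((hderiv x hx.1).continuousWithinAt).mono (fun y hy => hy.1)
  have key : ∀ ⦃x⦄, x ∈ Set.Icc (0:ℝ) t → u x ≤ B x := by
    refine image_le_of_deriv_right_lt_deriv_boundary hcont
      (fun x hx => (hderiv x hx.1).mono (Set.Ici_subset_Ici.2 hx.1)) ?_ hBderiv ?_
    · have : B 0 = M + Real.exp 1 := by
        simp [hBdef, hL, Real.exp_log hMe]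
      rw [this]
      have := Real.exp_pos 1
      linarith
    · intro x hx heq
      have hx0 : 0 ≤ x := hx.1
      have hBpos : 0 < B x := Real.exp_pos _
      have hlogB : Real.log (B x) = Real.exp (2 * C * x) * L := Real.log_exp _
      -- at a touching point, x must be positive
      have hxpos : 0 < x := by
        rcases lt_or_eq_of_le hx0 with h | h
        · exact h
        · exfalso
          subst h
          have hB0 : B 0 = M + Real.exp 1 := by
            simp [hBdef, hL, Real.exp_log hMe]
          rw [hB0] at heq
          linarith [Real.exp_pos 1]
      have hgt1 : 1 < Real.exp (2 * C * x) * L := by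
        have h1 : 1 < Real.exp (2 * C * x) := by
          rw [← Real.exp_zero]
          exact Real.exp_lt_exp.2 (by positivity)
        nlinarith
      calc u' x ≤ C * u x * (1 + max (Real.log (u x)) 0) := hineq x hx0
        _ = C * B x * (1 + Real.exp (2 * C * x) * L) := by
            rw [heq, hlogB, max_eq_left (by linarith)]
        _ < C * B x * (2 * (Real.exp (2 * C * x) * L)) := by
            have hCB : 0 < C * B x := by positivity
            apply mul_lt_mul_of_pos_left _ hCB
            linarith
        _ = B' x := by simp [hB'def, hBdef]; ring
  exact key ⟨ht, le_refl t⟩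
end
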